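/- arXiv:2411.04452 — 5 statements merged into one kernel-verified Lean document; each statement's English description precedes it below -/
import Mathlib

section
/- (RIP operator-form inequality) Suppose the measurement map 𝒜 satisfies the (2r, δ)-RIP. Then for any ρ ∈ ℂ^{D×D} with rank(ρ) ≤ r and any B ∈ ℂ^{D×r}, ‖(D/K)·Σ_{k=1}^K trace(A_k ρ)·A_k·B − ρ·B‖_F ≤ 2δ·‖ρ‖_F·‖B‖, where ‖B‖ denotes the spectral norm of B. -/
open Matrix
open scoped BigOperators ComplexOrder

/-- Frobenius norm of a complex matrix. -/
noncomputable def frobNorm {m n : ℕ} (A : Matrix (Fin m) (Fin n) ℂ) : ℝ :=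
  Real.sqrt (∑ i, ∑ j, ‖A i j‖ ^ 2)

/-- Spectral norm (largest singular value) of a complex matrix, as the operator
norm of the induced map between Euclidean spaces. -/
noncomputable def specNorm {m n : ℕ} (A : Matrix (Fin m) (Fin n) ℂ) : ℝ :=
  ‖LinearMap.toContinuousLinearMap (Matrix.toEuclideanLin A)‖

/-- The measurement map `𝒜(ρ)_k = trace (A k * ρ)` satisfies the `(s, δ)`-RIP. -/
def IsRIP {D K : ℕ} (A : Fin K → Matrix (Fin D) (Fin D) ℂ) (s : ℕ) (δ : ℝ) : Prop :=
  ∀ ρ : Matrix (Fin D) (Fin D) ℂ, ρ.rank ≤ s →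
    (1 - δ) * frobNorm ρ ^ 2 ≤ ((D : ℝ) / (K : ℝ)) * ∑ k, ‖Matrix.trace (A k * ρ)‖ ^ 2 ∧
      ((D : ℝ) / (K : ℝ)) * ∑ k, ‖Matrix.trace (A k * ρ)‖ ^ 2 ≤ (1 + δ) * frobNorm ρ ^ 2

/-- The adjoint of the measurement map: `𝒜*(e) = Σ_k e_k A_k`. -/
noncomputable def adjointMap {D K : ℕ} (A : Fin K → Matrix (Fin D) (Fin D) ℂ)
    (e : Fin K → ℝ) : Matrix (Fin D) (Fin D) ℂ :=
  ∑ k, (e k : ℂ) • A k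

/-- The Wirtinger gradient `G(U) = (D/K) Σ_k (trace(A_k U Uᴴ) − ŷ_k) A_k U`. -/
noncomputable def wGrad {D K r : ℕ} (A : Fin K → Matrix (Fin D) (Fin D) ℂ)
    (yhat : Fin K → ℝ) (U : Matrix (Fin D) (Fin r) ℂ) : Matrix (Fin D) (Fin r) ℂ :=
  ((D : ℂ) / (K : ℂ)) • ∑ k, (Matrix.trace (A k * (U * Uᴴ)) - (yhat k : ℂ)) • (A k * U)

/-- The Wirtinger Hessian quadratic form at `U` in direction `Δ`. -/
noncomputable def wHess {D K r : ℕ} (A : Fin K → Matrix (Fin D) (Fin D) ℂ)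
    (yhat : Fin K → ℝ) (U Δ : Matrix (Fin D) (Fin r) ℂ) : ℝ :=
  (2 * (D : ℝ) / (K : ℝ)) * ∑ k, (‖Matrix.trace (A k * (U * Δᴴ))‖ ^ 2
      + ((Matrix.trace (A k * (U * Δᴴ))) ^ 2).re)
    + (2 * (D : ℝ) / (K : ℝ)) *
      (Matrix.trace ((∑ k, (Matrix.trace (A k * (U * Uᴴ)) - (yhat k : ℂ)) • A k)
        * (Δ * Δᴴ))).re

/-- The function `h(δ)` from the recovery-error bound. -/
noncomputable def hfun (δ : ℝ) : ℝ :=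
  (Real.sqrt 2 + Real.sqrt (82.55 - 762.54 * δ - 843.09 * δ ^ 2)) / (1.5 - 15.7 * δ)

/-- The smallest singular value `σ_r(X)`: the square root of the smallest
eigenvalue of `Xᴴ X`. -/
noncomputable def sigmaMin {D r : ℕ} (X : Matrix (Fin D) (Fin r) ℂ) : ℝ :=
  Real.sqrt (⨅ i : Fin r, (Matrix.isHermitian_conjTranspose_mul_self X).eigenvalues i)

namespace S13

noncomputable def innF {m n : ℕ} (X Y : Matrix (Fin m) (Fin n) ℂ) : ℂ :=
  ∑ i, ∑ j, (starRingEnd ℂ) (X i j) * Y i j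

lemma frob_nonneg {m n : ℕ} (X : Matrix (Fin m) (Fin n) ℂ) : 0 ≤ frobNorm X :=
  Real.sqrt_nonneg _

lemma frob_sq {m n : ℕ} (X : Matrix (Fin m) (Fin n) ℂ) :
    frobNorm X ^ 2 = ∑ i, ∑ j, ‖X i j‖ ^ 2 := by
  apply Real.sq_sqrt
  positivity

lemma innF_self_re {m n : ℕ} (X : Matrix (Fin m) (Fin n) ℂ) :
    (innF X X).re = frobNorm X ^ 2 := by
  rw [frob_sq, innF]
  rw [Complex.re_sum]
  apply Finset.sum_congr rfl
  intro i _
  rw [Complex.re_sum]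
  apply Finset.sum_congr rfl
  intro j _
  rw [mul_comm, Complex.mul_conj]
  simp [Complex.sq_norm]

lemma innF_conj {m n : ℕ} (X Y : Matrix (Fin m) (Fin n) ℂ) :
    innF Y X = (starRingEnd ℂ) (innF X Y) := by
  simp only [innF, map_sum]
  refine Finset.sum_congr rfl fun i _ => Finset.sum_congr rfl fun j _ => ?_
  rw [map_mul (starRingEnd ℂ), Complex.conj_conj]; ring


lemma innF_expand_add {m n : ℕ} (X Y : Matrix (Fin m) (Fin n) ℂ) :
    innF (X + Y) (X + Y) = innF X X + innF Y Y + innF X Y + innF Y X := by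
  simp only [innF, Matrix.add_apply, map_add, add_mul, mul_add, Finset.sum_add_distrib]
  ring

lemma innF_expand_sub {m n : ℕ} (X Y : Matrix (Fin m) (Fin n) ℂ) :
    innF (X - Y) (X - Y) = innF X X + innF Y Y - innF X Y - innF Y X := by
  simp only [innF, Matrix.sub_apply, map_sub, sub_mul, mul_sub, Finset.sum_sub_distrib]
  ring

lemma re_add_conj (z : ℂ) : (z + (starRingEnd ℂ) z).re = 2 * z.re := by
  simp; ring

/-- complex correlation of measurements -/
noncomputable def Smeas {D K : ℕ} (A : Fin K → Matrix (Fin D) (Fin D) ℂ)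
    (X Y : Matrix (Fin D) (Fin D) ℂ) : ℂ :=
  ∑ k, (starRingEnd ℂ) (Matrix.trace (A k * X)) * Matrix.trace (A k * Y)

lemma Smeas_conj {D K : ℕ} (A : Fin K → Matrix (Fin D) (Fin D) ℂ)
    (X Y : Matrix (Fin D) (Fin D) ℂ) :
    Smeas A Y X = (starRingEnd ℂ) (Smeas A X Y) := by
  simp only [Smeas, map_sum]
  refine Finset.sum_congr rfl fun k _ => ?_
  rw [map_mul (starRingEnd ℂ), Complex.conj_conj]; ring

lemma normsq_trace {D K : ℕ} (A : Fin K → Matrix (Fin D) (Fin D) ℂ)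
    (X : Matrix (Fin D) (Fin D) ℂ) :
    ∑ k, ‖Matrix.trace (A k * X)‖ ^ 2 = (Smeas A X X).re := by
  rw [Smeas, Complex.re_sum]
  refine Finset.sum_congr rfl fun k _ => ?_
  rw [mul_comm, Complex.mul_conj]
  simp [Complex.sq_norm]

lemma Smeas_expand_add {D K : ℕ} (A : Fin K → Matrix (Fin D) (Fin D) ℂ)
    (X Y : Matrix (Fin D) (Fin D) ℂ) :
    Smeas A (X + Y) (X + Y) = Smeas A X X + Smeas A Y Y + Smeas A X Y + Smeas A Y X := by
  simp only [Smeas, Matrix.mul_add, Matrix.trace_add, map_add, add_mul, mul_add,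
    Finset.sum_add_distrib]
  ring

lemma Smeas_expand_sub {D K : ℕ} (A : Fin K → Matrix (Fin D) (Fin D) ℂ)
    (X Y : Matrix (Fin D) (Fin D) ℂ) :
    Smeas A (X - Y) (X - Y) = Smeas A X X + Smeas A Y Y - Smeas A X Y - Smeas A Y X := by
  simp only [Smeas, Matrix.mul_sub, Matrix.trace_sub, map_sub, sub_mul, mul_sub,
    Finset.sum_sub_distrib]
  ring

lemma rank_add_le' {m n : ℕ} (X Y : Matrix (Fin m) (Fin n) ℂ) :
    (X + Y).rank ≤ X.rank + Y.rank := by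
  classical
  rw [Matrix.rank, Matrix.rank, Matrix.rank, Matrix.mulVecLin_add]
  have h : LinearMap.range (X.mulVecLin + Y.mulVecLin) ≤
      LinearMap.range X.mulVecLin ⊔ LinearMap.range Y.mulVecLin := by
    rintro z ⟨v, rfl⟩
    exact Submodule.add_mem_sup ⟨v, rfl⟩ ⟨v, rfl⟩
  exact (Submodule.finrank_mono h).trans
    (Submodule.finrank_add_le_finrank_add_finrank _ _)

lemma rank_smul_le' {m n : ℕ} (c : ℂ) (X : Matrix (Fin m) (Fin n) ℂ) :
    (c • X).rank ≤ X.rank := by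
  have h : c • X = (c • (1 : Matrix (Fin m) (Fin m) ℂ)) * X := by
    rw [Matrix.smul_mul, Matrix.one_mul]
  rw [h]
  exact Matrix.rank_mul_le_right _ _

lemma rank_sub_le' {m n : ℕ} (X Y : Matrix (Fin m) (Fin n) ℂ) :
    (X - Y).rank ≤ X.rank + Y.rank := by
  have h : X - Y = X + (-1 : ℂ) • Y := by rw [neg_one_smul, sub_eq_add_neg]
  rw [h]
  exact (rank_add_le' _ _).trans (by
    have := rank_smul_le' (-1 : ℂ) Y
    omega)


lemma frob_eq_zero {m n : ℕ} {X : Matrix (Fin m) (Fin n) ℂ} (h : frobNorm X = 0) :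
    X = 0 := by
  have h2 : ∑ i, ∑ j, ‖X i j‖ ^ 2 = 0 := by
    rw [← frob_sq, h]; ring
  have hnn : ∀ p : Fin m, p ∈ (Finset.univ : Finset (Fin m)) →
      (0 : ℝ) ≤ ∑ j, ‖X p j‖ ^ 2 :=
    fun p _ => Finset.sum_nonneg fun q _ => sq_nonneg _
  have h3 := (Finset.sum_eq_zero_iff_of_nonneg hnn).mp h2
  ext i j
  have h4 := (Finset.sum_eq_zero_iff_of_nonneg
    (fun q (_ : q ∈ (Finset.univ : Finset (Fin n))) => sq_nonneg ‖X i q‖)).mp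
    (h3 i (Finset.mem_univ i)) j (Finset.mem_univ j)
  have h5 : ‖X i j‖ = 0 := by nlinarith [norm_nonneg (X i j)]
  simpa using h5

lemma key {D K r : ℕ} {A : Fin K → Matrix (Fin D) (Fin D) ℂ} {δ : ℝ}
    (hRIP : IsRIP A (2 * r) δ) (x y : Matrix (Fin D) (Fin D) ℂ)
    (hx : x.rank ≤ r) (hy : y.rank ≤ r) :
    ((D : ℝ) / (K : ℝ)) * (Smeas A x y).re - (innF x y).re ≤
      δ / 2 * (frobNorm x ^ 2 + frobNorm y ^ 2) := by
  obtain ⟨-, h1⟩ := hRIP (x + y) (by have := rank_add_le' x y; omega)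
  obtain ⟨h2, -⟩ := hRIP (x - y) (by have := rank_sub_le' x y; omega)
  rw [normsq_trace] at h1 h2
  rw [← innF_self_re] at h1 h2
  have e1 : (Smeas A (x + y) (x + y)).re =
      (Smeas A x x).re + (Smeas A y y).re + 2 * (Smeas A x y).re := by
    rw [Smeas_expand_add, Smeas_conj A x y]
    simp [Complex.add_re, Complex.conj_re]; ring
  have e2 : (Smeas A (x - y) (x - y)).re =
      (Smeas A x x).re + (Smeas A y y).re - 2 * (Smeas A x y).re := by
    rw [Smeas_expand_sub, Smeas_conj A x y]
    simp [Complex.add_re, Complex.sub_re, Complex.conj_re]; ring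
  have e3 : (innF (x + y) (x + y)).re =
      (innF x x).re + (innF y y).re + 2 * (innF x y).re := by
    rw [innF_expand_add, innF_conj x y]
    simp [Complex.add_re, Complex.conj_re]; ring
  have e4 : (innF (x - y) (x - y)).re =
      (innF x x).re + (innF y y).re - 2 * (innF x y).re := by
    rw [innF_expand_sub, innF_conj x y]
    simp [Complex.add_re, Complex.sub_re, Complex.conj_re]; ring
  rw [e1, e3] at h1
  rw [e2, e4] at h2
  rw [← innF_self_re, ← innF_self_re]
  nlinarith [h1, h2]

lemma innF_real_smul {D : ℕ} (c c' : ℝ) (x y : Matrix (Fin D) (Fin D) ℂ) :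
    innF ((c : ℂ) • x) ((c' : ℂ) • y) = ((c * c' : ℝ) : ℂ) * innF x y := by
  simp only [innF, Matrix.smul_apply, smul_eq_mul, _root_.map_mul, Complex.conj_ofReal,
    Finset.mul_sum]
  refine Finset.sum_congr rfl fun i _ => Finset.sum_congr rfl fun j _ => ?_
  push_cast; ring

lemma Smeas_real_smul {D K : ℕ} (A : Fin K → Matrix (Fin D) (Fin D) ℂ) (c c' : ℝ)
    (x y : Matrix (Fin D) (Fin D) ℂ) :
    Smeas A ((c : ℂ) • x) ((c' : ℂ) • y) = ((c * c' : ℝ) : ℂ) * Smeas A x y := by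
  simp only [Smeas, Matrix.mul_smul, Matrix.trace_smul, smul_eq_mul, _root_.map_mul,
    Complex.conj_ofReal, Finset.mul_sum]
  refine Finset.sum_congr rfl fun k _ => ?_
  push_cast; ring

lemma frob_sq_real_smul {m n : ℕ} (c : ℝ) (X : Matrix (Fin m) (Fin n) ℂ) :
    frobNorm ((c : ℂ) • X) ^ 2 = c ^ 2 * frobNorm X ^ 2 := by
  rw [frob_sq, frob_sq, Finset.mul_sum]
  refine Finset.sum_congr rfl fun i _ => ?_
  rw [Finset.mul_sum]
  refine Finset.sum_congr rfl fun j _ => ?_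
  simp [Matrix.smul_apply, norm_smul, mul_pow, Complex.norm_real, sq_abs]

lemma keyB {D K r : ℕ} {A : Fin K → Matrix (Fin D) (Fin D) ℂ} {δ : ℝ}
    (hδ0 : 0 ≤ δ) (hRIP : IsRIP A (2 * r) δ) (x y : Matrix (Fin D) (Fin D) ℂ)
    (hx : x.rank ≤ r) (hy : y.rank ≤ r) :
    ((D : ℝ) / (K : ℝ)) * (Smeas A x y).re - (innF x y).re ≤
      δ * frobNorm x * frobNorm y := by
  rcases eq_or_lt_of_le (frob_nonneg x) with hx0 | hx0
  · have : x = 0 := frob_eq_zero hx0.symm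
    subst this
    simp only [Smeas, innF, Matrix.mul_zero, Matrix.trace_zero, map_zero, zero_mul,
      Matrix.zero_apply, Finset.sum_const_zero, Complex.zero_re, mul_zero, sub_zero]
    exact mul_nonneg (mul_nonneg hδ0 (frob_nonneg _)) (frob_nonneg _)
  rcases eq_or_lt_of_le (frob_nonneg y) with hy0 | hy0
  · have : y = 0 := frob_eq_zero hy0.symm
    subst this
    simp only [Smeas, innF, Matrix.mul_zero, Matrix.trace_zero, Matrix.zero_apply,
      mul_zero, Finset.sum_const_zero, Complex.zero_re, sub_zero]
    exact mul_nonneg (mul_nonneg hδ0 (frob_nonneg _)) (frob_nonneg _)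
  set fx := frobNorm x with hfx
  set fy := frobNorm y with hfy
  set c : ℝ := Real.sqrt (fy / fx) with hc
  have hcpos : 0 < c := Real.sqrt_pos.mpr (by positivity)
  have hc2 : c ^ 2 = fy / fx := Real.sq_sqrt (by positivity)
  have hxc : ((c : ℂ) • x).rank ≤ r := (rank_smul_le' _ _).trans hx
  have hyc : (((c⁻¹ : ℝ) : ℂ) • y).rank ≤ r := (rank_smul_le' _ _).trans hy
  have h := key hRIP ((c : ℂ) • x) (((c⁻¹ : ℝ) : ℂ) • y) hxc hyc
  rw [Smeas_real_smul, innF_real_smul, frob_sq_real_smul, frob_sq_real_smul] at h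
  rw [mul_inv_cancel₀ (ne_of_gt hcpos)] at h
  simp only [Complex.ofReal_one, one_mul] at h
  have hrw : δ / 2 * (c ^ 2 * fx ^ 2 + c⁻¹ ^ 2 * fy ^ 2) = δ * fx * fy := by
    rw [inv_pow, hc2]
    field_simp
    ring
  rw [hrw] at h
  exact h

set_option maxHeartbeats 1000000 in
lemma mulVec_sq_le {D r : ℕ} (B : Matrix (Fin D) (Fin r) ℂ) (w : Fin r → ℂ) :
    ∑ i, ‖(B *ᵥ w) i‖ ^ 2 ≤ specNorm B ^ 2 * ∑ l, ‖w l‖ ^ 2 := by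
  have h := (LinearMap.toContinuousLinearMap (Matrix.toEuclideanLin B)).le_opNorm
    ((WithLp.equiv 2 (Fin r → ℂ)).symm w)
  have e0 : (LinearMap.toContinuousLinearMap (Matrix.toEuclideanLin B))
      ((WithLp.equiv 2 (Fin r → ℂ)).symm w) =
      (WithLp.equiv 2 (Fin D → ℂ)).symm (B *ᵥ w) := rfl
  rw [e0] at h
  have e1 : ‖(WithLp.equiv 2 (Fin D → ℂ)).symm (B *ᵥ w)‖ =
      Real.sqrt (∑ i, ‖(B *ᵥ w) i‖ ^ 2) := by
    rw [EuclideanSpace.norm_eq]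
    simp
  have e2 : ‖(WithLp.equiv 2 (Fin r → ℂ)).symm w‖ = Real.sqrt (∑ l, ‖w l‖ ^ 2) := by
    rw [EuclideanSpace.norm_eq]
    simp
  rw [e1, e2] at h
  have hspec : ‖LinearMap.toContinuousLinearMap (Matrix.toEuclideanLin B)‖ = specNorm B := rfl
  rw [hspec] at h
  have h2 : Real.sqrt (∑ i, ‖(B *ᵥ w) i‖ ^ 2) ^ 2 ≤
      (specNorm B * Real.sqrt (∑ l, ‖w l‖ ^ 2)) ^ 2 := by
    apply pow_le_pow_left₀ (Real.sqrt_nonneg _) h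
  rw [Real.sq_sqrt (Finset.sum_nonneg fun i _ => sq_nonneg _), mul_pow,
    Real.sq_sqrt (Finset.sum_nonneg fun l _ => sq_nonneg _)] at h2
  exact h2

lemma frob_mul_conjTranspose_le {D r : ℕ} (X B : Matrix (Fin D) (Fin r) ℂ) :
    frobNorm (X * Bᴴ) ≤ frobNorm X * specNorm B := by
  have spec0 : (0 : ℝ) ≤ specNorm B := norm_nonneg _
  have hkey : ∀ i, ∑ j, ‖(X * Bᴴ) i j‖ ^ 2 ≤ specNorm B ^ 2 * ∑ l, ‖X i l‖ ^ 2 := by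
    intro i
    have h := mulVec_sq_le B (star (X i))
    have e : ∀ j, ‖(X * Bᴴ) i j‖ = ‖(B *ᵥ star (X i)) j‖ := by
      intro j
      have : (X * Bᴴ) i j = star ((B *ᵥ star (X i)) j) := by
        simp only [Matrix.mul_apply, Matrix.mulVec, dotProduct,
          Matrix.conjTranspose_apply, Pi.star_apply, star_sum, star_mul', star_star]
        refine Finset.sum_congr rfl fun l _ => ?_
        ring
      rw [this, norm_star]
    calc ∑ j, ‖(X * Bᴴ) i j‖ ^ 2 = ∑ j, ‖(B *ᵥ star (X i)) j‖ ^ 2 := by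
          refine Finset.sum_congr rfl fun j _ => by rw [e j]
      _ ≤ specNorm B ^ 2 * ∑ l, ‖star (X i) l‖ ^ 2 := h
      _ = specNorm B ^ 2 * ∑ l, ‖X i l‖ ^ 2 := by
          congr 1
          exact Finset.sum_congr rfl fun l _ => by rw [Pi.star_apply, norm_star]
  have hsum : ∑ i, ∑ j, ‖(X * Bᴴ) i j‖ ^ 2 ≤ (frobNorm X * specNorm B) ^ 2 := by
    calc ∑ i, ∑ j, ‖(X * Bᴴ) i j‖ ^ 2 ≤ ∑ i, specNorm B ^ 2 * ∑ l, ‖X i l‖ ^ 2 :=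
          Finset.sum_le_sum fun i _ => hkey i
      _ = specNorm B ^ 2 * ∑ i, ∑ l, ‖X i l‖ ^ 2 := by rw [Finset.mul_sum]
      _ = (frobNorm X * specNorm B) ^ 2 := by rw [← frob_sq, mul_pow]; ring
  have h2 := Real.sqrt_le_sqrt hsum
  rw [Real.sqrt_sq (mul_nonneg (frob_nonneg X) spec0)] at h2
  exact h2

lemma inn_trace {m n : ℕ} (X Y : Matrix (Fin m) (Fin n) ℂ) :
    innF X Y = Matrix.trace (Xᴴ * Y) := by
  simp only [Matrix.trace, Matrix.diag, Matrix.mul_apply, Matrix.conjTranspose_apply, innF,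
    Complex.star_def]
  rw [Finset.sum_comm]

lemma inn_mul_right {D r : ℕ} (M : Matrix (Fin D) (Fin D) ℂ)
    (C B : Matrix (Fin D) (Fin r) ℂ) :
    innF (M * B) C = innF M (C * Bᴴ) := by
  rw [inn_trace, inn_trace, Matrix.conjTranspose_mul, Matrix.trace_mul_cycle,
    Matrix.trace_mul_comm]

lemma innF_decomp {D K : ℕ} (A : Fin K → Matrix (Fin D) (Fin D) ℂ)
    (hA : ∀ k, (A k).IsHermitian) (ρ σ : Matrix (Fin D) (Fin D) ℂ) :
    innF (((D : ℂ) / (K : ℂ)) • (∑ k, Matrix.trace (A k * ρ) • A k) - ρ) σ =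
      ((D : ℂ) / (K : ℂ)) * Smeas A ρ σ - innF ρ σ := by
  have hsub : ∀ X Y Z : Matrix (Fin D) (Fin D) ℂ, innF (X - Y) Z = innF X Z - innF Y Z := by
    intro X Y Z
    simp [innF, map_sub, sub_mul, Finset.sum_sub_distrib]
  have hsmul : ∀ (c : ℂ) (X Z : Matrix (Fin D) (Fin D) ℂ),
      innF (c • X) Z = (starRingEnd ℂ) c * innF X Z := by
    intro c X Z
    simp only [innF, Matrix.smul_apply, smul_eq_mul, _root_.map_mul, Finset.mul_sum]
    exact Finset.sum_congr rfl fun i _ => Finset.sum_congr rfl fun j _ => by ring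
  have hsumL : ∀ (f : Fin K → Matrix (Fin D) (Fin D) ℂ) (Z : Matrix (Fin D) (Fin D) ℂ),
      innF (∑ k, f k) Z = ∑ k, innF (f k) Z := by
    intro f Z
    simp only [innF, Matrix.sum_apply, map_sum, Finset.sum_mul]
    have step : ∀ i : Fin D, (∑ j, ∑ k, (starRingEnd ℂ) (f k i j) * Z i j)
        = ∑ k, ∑ j, (starRingEnd ℂ) (f k i j) * Z i j := fun i => Finset.sum_comm
    rw [Finset.sum_congr rfl fun i _ => step i, Finset.sum_comm]
  rw [hsub, hsmul, hsumL]
  have hAk : ∀ k, innF (A k) σ = Matrix.trace (A k * σ) := by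
    intro k
    rw [inn_trace, (hA k).eq]
  have : ∀ k, innF (Matrix.trace (A k * ρ) • A k) σ =
      (starRingEnd ℂ) (Matrix.trace (A k * ρ)) * Matrix.trace (A k * σ) := by
    intro k
    rw [hsmul, hAk]
  rw [Finset.sum_congr rfl fun k _ => this k]
  have hconj : (starRingEnd ℂ) ((D : ℂ) / (K : ℂ)) = (D : ℂ) / (K : ℂ) := by
    simp [map_div₀]
  rw [hconj, Smeas]

end S13

/-- RIP operator-form inequality. -/
theorem stmt_13 {D K r : ℕ} (hD : 0 < D) (hK : 0 < K) (hr : 0 < r) (hrD : r ≤ D)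
    (A : Fin K → Matrix (Fin D) (Fin D) ℂ) (hA : ∀ k, (A k).IsHermitian)
    (δ : ℝ) (hδ0 : 0 ≤ δ) (hδ1 : δ < 1) (hRIP : IsRIP A (2 * r) δ)
    (ρ : Matrix (Fin D) (Fin D) ℂ) (hρ : ρ.rank ≤ r)
    (B : Matrix (Fin D) (Fin r) ℂ) :
    frobNorm (((D : ℂ) / (K : ℂ)) • ((∑ k, Matrix.trace (A k * ρ) • A k) * B) - ρ * B) ≤
      2 * δ * frobNorm ρ * specNorm B := by
  classical
  have hG : ((D : ℂ) / (K : ℂ)) • ((∑ k, Matrix.trace (A k * ρ) • A k) * B) - ρ * B =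
      (((D : ℂ) / (K : ℂ)) • (∑ k, Matrix.trace (A k * ρ) • A k) - ρ) * B := by
    rw [Matrix.sub_mul, Matrix.smul_mul]
  rw [hG]
  set M : Matrix (Fin D) (Fin D) ℂ :=
    ((D : ℂ) / (K : ℂ)) • (∑ k, Matrix.trace (A k * ρ) • A k) - ρ with hM
  have hrankσ : ((M * B) * Bᴴ).rank ≤ r :=
    calc ((M * B) * Bᴴ).rank ≤ Bᴴ.rank := Matrix.rank_mul_le_right _ _
      _ = B.rank := Matrix.rank_conjTranspose B
      _ ≤ r := Matrix.rank_le_width B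
  have hC : S13.innF (M * B) (M * B) =
      ((D : ℂ) / (K : ℂ)) * S13.Smeas A ρ ((M * B) * Bᴴ) -
        S13.innF ρ ((M * B) * Bᴴ) := by
    rw [S13.inn_mul_right]
    exact S13.innF_decomp A hA ρ ((M * B) * Bᴴ)
  have hR : (S13.innF (M * B) (M * B)).re =
      ((D : ℝ) / (K : ℝ)) * (S13.Smeas A ρ ((M * B) * Bᴴ)).re -
        (S13.innF ρ ((M * B) * Bᴴ)).re := by
    rw [hC]
    have hc : (D : ℂ) / (K : ℂ) = (((D : ℝ) / (K : ℝ) : ℝ) : ℂ) := by push_cast; ring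
    rw [hc, Complex.sub_re, Complex.re_ofReal_mul]
  have hb := S13.keyB hδ0 hRIP ρ ((M * B) * Bᴴ) hρ hrankσ
  have hfrob : frobNorm (M * B) ^ 2 ≤ δ * frobNorm ρ * frobNorm ((M * B) * Bᴴ) := by
    rw [← S13.innF_self_re (M * B), hR]
    exact hb
  have hσle : frobNorm ((M * B) * Bᴴ) ≤ frobNorm (M * B) * specNorm B :=
    S13.frob_mul_conjTranspose_le (M * B) B
  have f0 := S13.frob_nonneg (M * B)
  have fρ0 := S13.frob_nonneg ρ
  have s0 : (0 : ℝ) ≤ specNorm B := norm_nonneg _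
  rcases eq_or_lt_of_le f0 with h0 | h0
  · rw [← h0]
    have : (0 : ℝ) ≤ 2 * δ * frobNorm ρ * specNorm B := by
      apply mul_nonneg (mul_nonneg (mul_nonneg (by norm_num) hδ0) fρ0) s0
    linarith
  · nlinarith [mul_le_mul_of_nonneg_left hσle (mul_nonneg hδ0 fρ0), hfrob, h0,
      mul_nonneg (mul_nonneg hδ0 fρ0) s0]
end

section
/- Let U, Y ∈ ℂ^{D×r} be such that U^H Y = Y^H U and U^H Y is positive semidefinite. Then ‖(U − Y)·U^H‖_F² ≤ (1/(2(√2 − 1)))·‖U U^H − Y Y^H‖_F². -/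
open Matrix
open scoped BigOperators ComplexOrder

lemma trace_conj_self_re {m n : ℕ} (A : Matrix (Fin m) (Fin n) ℂ) :
    (Matrix.trace (Aᴴ * A)).re = ∑ i, ∑ j, ‖A i j‖ ^ 2 := by
  simp only [Matrix.trace, Matrix.diag, Matrix.mul_apply, Matrix.conjTranspose_apply,
    Complex.re_sum]
  rw [Finset.sum_comm]
  congr 1; ext i; congr 1; ext j
  simp only [Complex.star_def, Complex.conj_mul']
  rw [← Complex.ofReal_pow, Complex.ofReal_re, Complex.sq_norm]

lemma frob_sq {m n : ℕ} (A : Matrix (Fin m) (Fin n) ℂ) :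
    frobNorm A ^ 2 = (Matrix.trace (Aᴴ * A)).re := by
  rw [trace_conj_self_re, frobNorm, Real.sq_sqrt]
  positivity

lemma trace_conj_mul_re {m n : ℕ} (A B : Matrix (Fin m) (Fin n) ℂ) :
    (Matrix.trace (Aᴴ * B)).re = ∑ i, ∑ j, (star (A i j) * B i j).re := by
  simp only [Matrix.trace, Matrix.diag, Matrix.mul_apply, Matrix.conjTranspose_apply,
    Complex.re_sum]
  rw [Finset.sum_comm]

lemma trace_conj_self_re_nonneg {m n : ℕ} (A : Matrix (Fin m) (Fin n) ℂ) :
    0 ≤ (Matrix.trace (Aᴴ * A)).re := by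
  rw [trace_conj_self_re]; positivity

lemma trace_cs {m n : ℕ} (A B : Matrix (Fin m) (Fin n) ℂ) :
    (Matrix.trace (Aᴴ * B)).re ≤
      Real.sqrt ((Matrix.trace (Aᴴ * A)).re) * Real.sqrt ((Matrix.trace (Bᴴ * B)).re) := by
  rw [trace_conj_mul_re, trace_conj_self_re, trace_conj_self_re]
  have step1 : ∑ i, ∑ j, (star (A i j) * B i j).re ≤ ∑ i, ∑ j, ‖A i j‖ * ‖B i j‖ := by
    refine Finset.sum_le_sum fun i _ => Finset.sum_le_sum fun j _ => ?_
    calc (star (A i j) * B i j).re ≤ ‖star (A i j) * B i j‖ := Complex.re_le_norm _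
      _ = ‖A i j‖ * ‖B i j‖ := by rw [norm_mul, norm_star]
  refine step1.trans ?_
  have key := Real.sum_mul_le_sqrt_mul_sqrt (Finset.univ ×ˢ Finset.univ)
    (fun p : Fin m × Fin n => ‖A p.1 p.2‖) (fun p => ‖B p.1 p.2‖)
  simpa only [Finset.sum_product] using key

lemma scalar_end (s x y a1 a2 a3 a4 a5 a6 L R : ℝ)
    (hs : s ^ 2 = 2) (hs0 : 0 ≤ s)
    (hx : x ^ 2 = a1 + a2 + 4*a3 + 2*a4 - 4*a5 - 4*a6)
    (hy : y ^ 2 = a2 + a3 - 2*a6)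
    (hpb : 0 ≤ a5 + a6 - 2*a3)
    (hcs : (a4 + a2 - 2*a6) - (a5 + a6 - 2*a3) ≤ x * y)
    (hL : L = a1 + a4 - 2*a5) (hR : R = a1 + a2 - 2*a3) :
    L ≤ 1 / (2 * (s - 1)) * R := by
  have hs1 : 1 < s := by nlinarith
  have h4 : 0 ≤ 4 - 2*s := by nlinarith
  have hpos : 0 < 2 * (s - 1) := by linarith
  rw [hL, hR, one_div, inv_mul_eq_div, le_div_iff₀ hpos]
  have t1 : 0 ≤ (4 - 2*s) * (x*y - ((a4 + a2 - 2*a6) - (a5 + a6 - 2*a3))) :=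
    mul_nonneg h4 (by linarith)
  have t2 : 0 ≤ (4 - 2*s) * (a5 + a6 - 2*a3) := mul_nonneg h4 hpb
  have key : (a1 + a2 - 2*a3) - (a1 + a4 - 2*a5) * (2 * (s - 1)) =
      ((s-1)*x - s*y)^2 + (4 - 2*s) * (x*y - ((a4 + a2 - 2*a6) - (a5 + a6 - 2*a3)))
        + (4 - 2*s) * (a5 + a6 - 2*a3) := by
    linear_combination (2*s - 3) * hx + (-2) * hy + (-(x - y)^2) * hs
  nlinarith [sq_nonneg ((s-1)*x - s*y), t1, t2, key]


theorem stmt_14 {D r : ℕ} (U Y : Matrix (Fin D) (Fin r) ℂ)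
    (hsym : Uᴴ * Y = Yᴴ * U) (hpsd : (Uᴴ * Y).PosSemidef) :
    frobNorm ((U - Y) * Uᴴ) ^ 2 ≤
      1 / (2 * (Real.sqrt 2 - 1)) * frobNorm (U * Uᴴ - Y * Yᴴ) ^ 2 := by
  -- abbreviate products; all atoms:
  -- A1 = tr(CC), A2 = tr(GG), A3 = tr(BB), A4 = tr(CG), A5 = tr(CB), A6 = tr(GB)
  have hBH : (Uᴴ * Y)ᴴ = Uᴴ * Y := hpsd.1
  have hGH : (Yᴴ * Y)ᴴ = Yᴴ * Y := Matrix.isHermitian_conjTranspose_mul_self Y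
  have hPH : ((U - Y)ᴴ * (U - Y))ᴴ = (U - Y)ᴴ * (U - Y) :=
    Matrix.isHermitian_conjTranspose_mul_self (U - Y)
  have hP : (U - Y)ᴴ * (U - Y) = Uᴴ*U + Yᴴ*Y - Uᴴ*Y - Uᴴ*Y := by
    rw [Matrix.conjTranspose_sub, Matrix.sub_mul, Matrix.mul_sub, Matrix.mul_sub, ← hsym]
    abel
  -- rotation of the LHS trace
  have key1 : Matrix.trace (((U - Y) * Uᴴ)ᴴ * ((U - Y) * Uᴴ))
      = Matrix.trace ((U - Y)ᴴ * (U - Y) * (Uᴴ * U)) := by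
    rw [Matrix.conjTranspose_mul, Matrix.conjTranspose_conjTranspose]
    simp only [Matrix.mul_assoc]
    rw [Matrix.trace_mul_comm]
    simp only [Matrix.mul_assoc]
  have c1 : Matrix.trace (((U - Y) * Uᴴ)ᴴ * ((U - Y) * Uᴴ))
      = Matrix.trace ((Uᴴ*U)*(Uᴴ*U)) + Matrix.trace ((Uᴴ*U)*(Yᴴ*Y))
        - Matrix.trace ((Uᴴ*U)*(Uᴴ*Y)) - Matrix.trace ((Uᴴ*U)*(Uᴴ*Y)) := by
    rw [key1, hP]
    simp only [Matrix.add_mul, Matrix.sub_mul, Matrix.trace_add, Matrix.trace_sub]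
    rw [Matrix.trace_mul_comm (Yᴴ*Y) (Uᴴ*U), Matrix.trace_mul_comm (Uᴴ*Y) (Uᴴ*U)]
  -- rotations for E
  have hEH : (U*Uᴴ - Y*Yᴴ)ᴴ = U*Uᴴ - Y*Yᴴ := by
    simp [Matrix.conjTranspose_sub, Matrix.conjTranspose_mul]
  have e1 : Matrix.trace ((U*Uᴴ)*(U*Uᴴ)) = Matrix.trace ((Uᴴ*U)*(Uᴴ*U)) := by
    simp only [Matrix.mul_assoc]; rw [Matrix.trace_mul_comm]; simp only [Matrix.mul_assoc]
  have e2 : Matrix.trace ((U*Uᴴ)*(Y*Yᴴ)) = Matrix.trace ((Uᴴ*Y)*(Uᴴ*Y)) := by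
    nth_rewrite 2 [hsym]
    simp only [Matrix.mul_assoc]; rw [Matrix.trace_mul_comm]; simp only [Matrix.mul_assoc]
  have e3 : Matrix.trace ((Y*Yᴴ)*(U*Uᴴ)) = Matrix.trace ((Uᴴ*Y)*(Uᴴ*Y)) := by
    nth_rewrite 1 [hsym]
    simp only [Matrix.mul_assoc]; rw [Matrix.trace_mul_comm]; simp only [Matrix.mul_assoc]
  have e4 : Matrix.trace ((Y*Yᴴ)*(Y*Yᴴ)) = Matrix.trace ((Yᴴ*Y)*(Yᴴ*Y)) := by
    simp only [Matrix.mul_assoc]; rw [Matrix.trace_mul_comm]; simp only [Matrix.mul_assoc]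
  have c2 : Matrix.trace ((U*Uᴴ - Y*Yᴴ)ᴴ * (U*Uᴴ - Y*Yᴴ))
      = Matrix.trace ((Uᴴ*U)*(Uᴴ*U)) + Matrix.trace ((Yᴴ*Y)*(Yᴴ*Y))
        - Matrix.trace ((Uᴴ*Y)*(Uᴴ*Y)) - Matrix.trace ((Uᴴ*Y)*(Uᴴ*Y)) := by
    rw [hEH]
    simp only [Matrix.sub_mul, Matrix.mul_sub, Matrix.trace_sub]
    rw [e1, e2, e3, e4]; ring
  -- expansion of tr(P*P)
  have c3 : Matrix.trace (((U - Y)ᴴ * (U - Y)) * ((U - Y)ᴴ * (U - Y)))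
      = Matrix.trace ((Uᴴ*U)*(Uᴴ*U)) + Matrix.trace ((Yᴴ*Y)*(Yᴴ*Y))
        + ((4 : ℂ) * Matrix.trace ((Uᴴ*Y)*(Uᴴ*Y))) + ((2 : ℂ) * Matrix.trace ((Uᴴ*U)*(Yᴴ*Y)))
        - ((4 : ℂ) * Matrix.trace ((Uᴴ*U)*(Uᴴ*Y))) - ((4 : ℂ) * Matrix.trace ((Yᴴ*Y)*(Uᴴ*Y))) := by
    rw [hP]
    simp only [Matrix.add_mul, Matrix.sub_mul, Matrix.mul_add, Matrix.mul_sub,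
      Matrix.trace_add, Matrix.trace_sub]
    rw [Matrix.trace_mul_comm (Yᴴ*Y) (Uᴴ*U), Matrix.trace_mul_comm (Uᴴ*Y) (Uᴴ*U),
      Matrix.trace_mul_comm (Uᴴ*Y) (Yᴴ*Y)]
    ring
  -- expansion of tr(Q*Q), Q = G - B
  have hQH : (Yᴴ*Y - Uᴴ*Y)ᴴ = Yᴴ*Y - Uᴴ*Y := by
    rw [Matrix.conjTranspose_sub, hGH, hBH]
  have c4 : Matrix.trace ((Yᴴ*Y - Uᴴ*Y) * (Yᴴ*Y - Uᴴ*Y))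
      = Matrix.trace ((Yᴴ*Y)*(Yᴴ*Y)) + Matrix.trace ((Uᴴ*Y)*(Uᴴ*Y))
        - ((2 : ℂ) * Matrix.trace ((Yᴴ*Y)*(Uᴴ*Y))) := by
    simp only [Matrix.sub_mul, Matrix.mul_sub, Matrix.trace_sub]
    rw [Matrix.trace_mul_comm (Uᴴ*Y) (Yᴴ*Y)]
    ring
  -- expansion of tr(P*B) and tr(P*G)
  have c5 : Matrix.trace (((U - Y)ᴴ * (U - Y)) * (Uᴴ*Y))
      = Matrix.trace ((Uᴴ*U)*(Uᴴ*Y)) + Matrix.trace ((Yᴴ*Y)*(Uᴴ*Y))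
        - ((2 : ℂ) * Matrix.trace ((Uᴴ*Y)*(Uᴴ*Y))) := by
    rw [hP]
    simp only [Matrix.add_mul, Matrix.sub_mul, Matrix.trace_add, Matrix.trace_sub]
    ring
  have c6 : Matrix.trace (((U - Y)ᴴ * (U - Y)) * (Yᴴ*Y))
      = Matrix.trace ((Uᴴ*U)*(Yᴴ*Y)) + Matrix.trace ((Yᴴ*Y)*(Yᴴ*Y))
        - ((2 : ℂ) * Matrix.trace ((Yᴴ*Y)*(Uᴴ*Y))) := by
    rw [hP]
    simp only [Matrix.add_mul, Matrix.sub_mul, Matrix.trace_add, Matrix.trace_sub]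
    rw [Matrix.trace_mul_comm (Uᴴ*Y) (Yᴴ*Y)]
    ring
  -- nonnegativity of tr(P*B)
  obtain ⟨M, hM⟩ : ∃ M : Matrix (Fin r) (Fin r) ℂ, Uᴴ * Y = Mᴴ * M := by
    open scoped MatrixOrder in
    classical
    obtain ⟨X, hX, -, hXe⟩ := CFC.exists_sqrt_of_isSelfAdjoint_of_quasispectrumRestricts
      hpsd.isHermitian (QuasispectrumRestricts.nnreal_of_nonneg hpsd.nonneg)
    exact ⟨X, by rw [← hXe]; congr 1; exact hX.star_eq.symm⟩
  have pbrot : Matrix.trace (((U - Y)ᴴ * (U - Y)) * (Uᴴ*Y))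
      = Matrix.trace (((U - Y)*Mᴴ)ᴴ * ((U - Y)*Mᴴ)) := by
    rw [hM, Matrix.conjTranspose_mul, Matrix.conjTranspose_conjTranspose]
    simp only [Matrix.mul_assoc]
    conv_rhs => rw [Matrix.trace_mul_comm]
    simp only [Matrix.mul_assoc]
  have hpbnn : 0 ≤ (Matrix.trace (((U - Y)ᴴ * (U - Y)) * (Uᴴ*Y))).re := by
    rw [pbrot]; exact trace_conj_self_re_nonneg _
  -- Cauchy-Schwarz
  have cs0 := trace_cs ((U - Y)ᴴ * (U - Y)) (Yᴴ*Y - Uᴴ*Y)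
  rw [hPH, hQH] at cs0
  -- pass to real parts
  set r1 : ℝ := (Matrix.trace ((Uᴴ*U)*(Uᴴ*U))).re with hr1
  set r2 : ℝ := (Matrix.trace ((Yᴴ*Y)*(Yᴴ*Y))).re with hr2
  set r3 : ℝ := (Matrix.trace ((Uᴴ*Y)*(Uᴴ*Y))).re with hr3
  set r4 : ℝ := (Matrix.trace ((Uᴴ*U)*(Yᴴ*Y))).re with hr4
  set r5 : ℝ := (Matrix.trace ((Uᴴ*U)*(Uᴴ*Y))).re with hr5
  set r6 : ℝ := (Matrix.trace ((Yᴴ*Y)*(Uᴴ*Y))).re with hr6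
  have H1 : frobNorm ((U - Y) * Uᴴ) ^ 2 = r1 + r4 - 2*r5 := by
    rw [frob_sq, c1]
    simp only [Complex.add_re, Complex.sub_re, hr1, hr4, hr5]
    ring
  have H2 : frobNorm (U*Uᴴ - Y*Yᴴ) ^ 2 = r1 + r2 - 2*r3 := by
    rw [frob_sq, c2]
    simp only [Complex.add_re, Complex.sub_re, hr1, hr2, hr3]
    ring
  -- the two sqrt quantities
  have hp2nn : 0 ≤ (Matrix.trace (((U - Y)ᴴ * (U - Y)) * ((U - Y)ᴴ * (U - Y)))).re := by
    have h := trace_conj_self_re_nonneg ((U - Y)ᴴ * (U - Y))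
    rwa [hPH] at h
  have htnn : 0 ≤ (Matrix.trace ((Yᴴ*Y - Uᴴ*Y) * (Yᴴ*Y - Uᴴ*Y))).re := by
    have h := trace_conj_self_re_nonneg (Yᴴ*Y - Uᴴ*Y)
    rwa [hQH] at h
  set x : ℝ := Real.sqrt ((Matrix.trace (((U - Y)ᴴ * (U - Y)) * ((U - Y)ᴴ * (U - Y)))).re) with hxdef
  set y : ℝ := Real.sqrt ((Matrix.trace ((Yᴴ*Y - Uᴴ*Y) * (Yᴴ*Y - Uᴴ*Y))).re) with hydef
  have hx : x ^ 2 = r1 + r2 + 4*r3 + 2*r4 - 4*r5 - 4*r6 := by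
    rw [hxdef, Real.sq_sqrt hp2nn, c3]
    simp only [Complex.add_re, Complex.sub_re, Complex.mul_re, Complex.re_ofNat,
      Complex.im_ofNat, zero_mul, sub_zero, hr1, hr2, hr3, hr4, hr5, hr6]
  have hy : y ^ 2 = r2 + r3 - 2*r6 := by
    rw [hydef, Real.sq_sqrt htnn, c4]
    simp only [Complex.add_re, Complex.sub_re, Complex.mul_re, Complex.re_ofNat,
      Complex.im_ofNat, zero_mul, sub_zero, hr2, hr3, hr6]
  have hpb : 0 ≤ r5 + r6 - 2*r3 := by
    rw [c5] at hpbnn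
    simp only [Complex.add_re, Complex.sub_re, Complex.mul_re, Complex.re_ofNat,
      Complex.im_ofNat, zero_mul, sub_zero, hr3, hr5, hr6] at hpbnn
    linarith
  have hcs : (r4 + r2 - 2*r6) - (r5 + r6 - 2*r3) ≤ x * y := by
    have hsplit : Matrix.trace (((U - Y)ᴴ * (U - Y)) * (Yᴴ*Y - Uᴴ*Y))
        = Matrix.trace (((U - Y)ᴴ * (U - Y)) * (Yᴴ*Y))
          - Matrix.trace (((U - Y)ᴴ * (U - Y)) * (Uᴴ*Y)) := by
      rw [Matrix.mul_sub, Matrix.trace_sub]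
    rw [hsplit, c5, c6] at cs0
    simp only [Complex.add_re, Complex.sub_re, Complex.mul_re, Complex.re_ofNat,
      Complex.im_ofNat, zero_mul, sub_zero, hr2, hr3, hr4, hr5, hr6] at cs0
    calc (r4 + r2 - 2*r6) - (r5 + r6 - 2*r3)
        = r4 + r2 - 2*r6 - (r5 + r6 - 2*r3) := by ring
      _ ≤ x * y := by rw [hxdef, hydef]; linarith [cs0]
  exact scalar_end (Real.sqrt 2) x y r1 r2 r3 r4 r5 r6 _ _
    (Real.sq_sqrt (by norm_num)) (Real.sqrt_nonneg 2) hx hy hpb hcs H1 H2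
end

section
/- Let X, Y ∈ ℂ^{D×r}, let P be the orthogonal projection matrix onto the column space of X (the unique Hermitian idempotent matrix whose range equals the column space of X), and let R be a unitary r×r matrix attaining min_{R' unitary} ‖X − Y R'‖_F. Then ‖X·(X − Y R)^H‖_F² ≤ (1/8)·‖X X^H − Y Y^H‖_F² + (3 + 1/(2(√2 − 1)))·‖(X X^H − Y Y^H)·P‖_F². -/
open Matrix
open scoped BigOperators ComplexOrder

namespace Stmt15

noncomputable def nsq {a b : ℕ} (A : Matrix (Fin a) (Fin b) ℂ) : ℝ :=
  (Matrix.trace (Aᴴ * A)).re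

noncomputable def ip {a b : ℕ} (A B : Matrix (Fin a) (Fin b) ℂ) : ℝ :=
  (Matrix.trace (Aᴴ * B)).re

variable {a b : ℕ}

lemma nsq_eq_sum (A : Matrix (Fin a) (Fin b) ℂ) :
    nsq A = ∑ i, ∑ j, ‖A i j‖ ^ 2 := by
  simp only [nsq, Matrix.trace, Matrix.diag, Matrix.mul_apply, Matrix.conjTranspose_apply,
    Complex.re_sum]
  rw [Finset.sum_comm]
  congr 1; ext i; congr 1; ext j
  rw [show star (A i j) * A i j = ((starRingEnd ℂ) (A i j)) * A i j from rfl,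
    Complex.conj_mul']
  simp [← Complex.ofReal_pow]

lemma frobNorm_sq (A : Matrix (Fin a) (Fin b) ℂ) : frobNorm A ^ 2 = nsq A := by
  rw [nsq_eq_sum, frobNorm, Real.sq_sqrt]
  positivity

lemma nsq_nonneg (A : Matrix (Fin a) (Fin b) ℂ) : 0 ≤ nsq A := by
  rw [nsq_eq_sum]; positivity

lemma re_trace_comm (A B : Matrix (Fin a) (Fin b) ℂ) :
    (Matrix.trace (Bᴴ * A)).re = (Matrix.trace (Aᴴ * B)).re := by
  have : Bᴴ * A = (Aᴴ * B)ᴴ := by simp [Matrix.conjTranspose_mul]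
  rw [this, Matrix.trace_conjTranspose]
  simp

lemma ip_comm (A B : Matrix (Fin a) (Fin b) ℂ) : ip A B = ip B A := re_trace_comm B A

lemma nsq_sub (A B : Matrix (Fin a) (Fin b) ℂ) :
    nsq (A - B) = nsq A - 2 * ip A B + nsq B := by
  simp only [nsq, ip, Matrix.conjTranspose_sub, Matrix.sub_mul, Matrix.mul_sub,
    Matrix.trace_sub, Complex.sub_re]
  have := re_trace_comm A B
  linarith

lemma ip_cs (A B : Matrix (Fin a) (Fin b) ℂ) :
    ip A B ≤ Real.sqrt (nsq A) * Real.sqrt (nsq B) := by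
  have h1 : ip A B ≤ ∑ i, ∑ j, ‖A i j‖ * ‖B i j‖ := by
    simp only [ip, Matrix.trace, Matrix.diag, Matrix.mul_apply, Matrix.conjTranspose_apply,
      Complex.re_sum]
    rw [Finset.sum_comm]
    refine Finset.sum_le_sum fun i _ => Finset.sum_le_sum fun j _ => ?_
    calc ((starRingEnd ℂ) (A i j) * B i j).re ≤ ‖(starRingEnd ℂ) (A i j) * B i j‖ :=
          Complex.re_le_norm _
      _ = ‖A i j‖ * ‖B i j‖ := by
          simp
  refine h1.trans ?_
  rw [nsq_eq_sum, nsq_eq_sum]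
  calc (∑ i, ∑ j, ‖A i j‖ * ‖B i j‖)
      = ∑ p : Fin a × Fin b, ‖A p.1 p.2‖ * ‖B p.1 p.2‖ := by rw [Fintype.sum_prod_type]
    _ ≤ Real.sqrt (∑ p : Fin a × Fin b, ‖A p.1 p.2‖ ^ 2) *
          Real.sqrt (∑ p : Fin a × Fin b, ‖B p.1 p.2‖ ^ 2) :=
        Real.sum_mul_le_sqrt_mul_sqrt _ _ _
    _ = Real.sqrt (∑ i, ∑ j, ‖A i j‖ ^ 2) * Real.sqrt (∑ i, ∑ j, ‖B i j‖ ^ 2) := by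
        rw [Fintype.sum_prod_type, Fintype.sum_prod_type]

lemma nsq_conjTranspose (A : Matrix (Fin a) (Fin b) ℂ) : nsq Aᴴ = nsq A := by
  simp only [nsq, Matrix.conjTranspose_conjTranspose]
  rw [Matrix.trace_mul_comm]

lemma ip_sub_left (A B C : Matrix (Fin a) (Fin b) ℂ) : ip (A - B) C = ip A C - ip B C := by
  simp [ip, Matrix.conjTranspose_sub, Matrix.sub_mul, Matrix.trace_sub, Complex.sub_re]

lemma nsq_sub4 (A B C E : Matrix (Fin a) (Fin b) ℂ) :
    nsq (((A - B) - C) - E) = nsq A + nsq B + nsq C + nsq E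
      - 2 * ip A B - 2 * ip A C - 2 * ip A E
      + 2 * ip B C + 2 * ip B E + 2 * ip C E := by
  simp only [nsq_sub, ip_sub_left]
  ring

lemma ip_sub_right (A B C : Matrix (Fin a) (Fin b) ℂ) : ip A (B - C) = ip A B - ip A C := by
  simp [ip, Matrix.mul_sub, Matrix.trace_sub, Complex.sub_re]


lemma quad_single {r : ℕ} (W : Matrix (Fin r) (Fin r) ℂ) (i j : Fin r) (a b : ℂ) :
    (star (Pi.single i a + Pi.single j b)) ⬝ᵥ (W *ᵥ (Pi.single i a + Pi.single j b)) =
      star a * W i i * a + star a * W i j * b + star b * W j i * a + star b * W j j * b := by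
  have hs : ∀ (k : Fin r) (c : ℂ), star (Pi.single k c) = (Pi.single k (star c) : Fin r → ℂ) := by
    intro k c; ext l; simp [Pi.single_apply, apply_ite (star : ℂ → ℂ)]
  simp only [star_add, hs, Matrix.mulVec_add, Matrix.mulVec_single, add_dotProduct,
    single_dotProduct, Pi.add_apply, Pi.smul_apply, Matrix.col_apply, MulOpposite.smul_eq_mul_unop, MulOpposite.unop_op]
  ring

lemma herm_of_quad {r : ℕ} (W : Matrix (Fin r) (Fin r) ℂ)
    (h : ∀ v : Fin r → ℂ, ((star v) ⬝ᵥ (W *ᵥ v)).im = 0) : Wᴴ = W := by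
  ext i j
  have h1 : (W i i).im = 0 := by
    have := h (Pi.single i 1 + Pi.single i 0)
    rw [quad_single] at this
    simpa using this
  have h1' : (W j j).im = 0 := by
    have := h (Pi.single j 1 + Pi.single j 0)
    rw [quad_single] at this
    simpa using this
  have h2 : (W i j).im + (W j i).im = 0 := by
    have := h (Pi.single i 1 + Pi.single j 1)
    rw [quad_single] at this
    simp only [star_one, one_mul, mul_one, Complex.add_im] at this
    linarith
  have h3 : (W i j).re - (W j i).re = 0 := by
    have := h (Pi.single i 1 + Pi.single j Complex.I)
    rw [quad_single] at this
    simp only [star_one, one_mul, mul_one, Complex.star_def, Complex.conj_I] at this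
    simp only [Complex.add_im, Complex.mul_im, Complex.mul_re, Complex.neg_re, Complex.neg_im,
      Complex.I_re, Complex.I_im, Complex.one_re, Complex.one_im] at this
    ring_nf at this ⊢
    linarith
  rw [Matrix.conjTranspose_apply]
  apply Complex.ext <;> simp [Complex.star_def] <;> linarith

lemma quadform_nonneg {r : ℕ} (W : Matrix (Fin r) (Fin r) ℂ)
    (hmin : ∀ V : Matrix (Fin r) (Fin r) ℂ, Vᴴ * V = 1 →
      (Matrix.trace (W * V)).re ≤ (Matrix.trace W).re)
    (v : Fin r → ℂ) :
    ((star v) ⬝ᵥ (W *ᵥ v)).im = 0 ∧ 0 ≤ ((star v) ⬝ᵥ (W *ᵥ v)).re := by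
  set s : ℂ := (star v) ⬝ᵥ (W *ᵥ v) with hsdef
  by_cases hv : v = 0
  · simp [hsdef, hv]
  · -- ν > 0
    set ν : ℝ := ∑ k, Complex.normSq (v k) with hν
    have hνpos : 0 < ν := by
      have : ∃ k, v k ≠ 0 := by
        by_contra hc; push_neg at hc; exact hv (funext hc)
      obtain ⟨k, hk⟩ := this
      have : 0 < Complex.normSq (v k) := Complex.normSq_pos.mpr hk
      exact lt_of_lt_of_le this (Finset.single_le_sum (f := fun k => Complex.normSq (v k))
        (fun i _ => Complex.normSq_nonneg _) (Finset.mem_univ k))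
    have hν0 : (ν : ℂ) ≠ 0 := by exact_mod_cast ne_of_gt hνpos
    have hsumν : (∑ k, star (v k) * v k) = (ν : ℂ) := by
      rw [hν]; push_cast
      refine Finset.sum_congr rfl fun k _ => ?_
      rw [show star (v k) = (starRingEnd ℂ) (v k) from rfl, Complex.normSq_eq_conj_mul_self]
    have key : ∀ c : ℂ, ‖c‖ = 1 → ((c - 1) * s).re ≤ 0 := by
      intro c hc
      have hc' : c * (starRingEnd ℂ) c = 1 := by
        rw [Complex.mul_conj]
        norm_cast
        rw [← Complex.sq_norm, hc, one_pow]
      set t : ℂ := (c - 1) / (ν : ℂ) with ht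
      set Q : Matrix (Fin r) (Fin r) ℂ := Matrix.vecMulVec v (star v) with hQ
      have hQH : Qᴴ = Q := by
        ext i j
        simp [hQ, Matrix.conjTranspose_apply, Matrix.vecMulVec_apply, mul_comm]
      have hQQ : Q * Q = (ν : ℂ) • Q := by
        ext i j
        simp only [hQ, Matrix.mul_apply, Matrix.vecMulVec_apply, Matrix.smul_apply,
          smul_eq_mul]
        calc ∑ k, v i * star (v k) * (v k * star (v j))
            = (∑ k, star (v k) * v k) * (v i * star (v j)) := by
              rw [Finset.sum_mul]; exact Finset.sum_congr rfl fun k _ => by ring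
          _ = (ν:ℂ) * (v i * star (v j)) := by rw [hsumν]
      set V : Matrix (Fin r) (Fin r) ℂ := 1 + t • Q with hV
      have hstart : star t = ((starRingEnd ℂ) c - 1) / (ν : ℂ) := by
        rw [ht]
        simp [star_div₀, Complex.star_def, map_sub, Complex.conj_ofReal]
      have hcoef : t + star t + star t * t * (ν:ℂ) = 0 := by
        have expand : t + star t + star t * t * (ν:ℂ) =
            ((c - 1) + ((starRingEnd ℂ) c - 1) + ((starRingEnd ℂ) c - 1) * (c - 1)) / (ν:ℂ) := by
          rw [ht, hstart]; field_simp
        have hzero : (c - 1) + ((starRingEnd ℂ) c - 1) + ((starRingEnd ℂ) c - 1) * (c - 1) = 0 := by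
          linear_combination hc'
        rw [expand, hzero, zero_div]
      have hVu : Vᴴ * V = 1 := by
        have hexp : Vᴴ * V = 1 + (t + star t + star t * t * (ν:ℂ)) • Q := by
          rw [hV, Matrix.conjTranspose_add, Matrix.conjTranspose_one, Matrix.conjTranspose_smul,
            hQH]
          rw [Matrix.add_mul, Matrix.mul_add, Matrix.mul_add]
          simp only [Matrix.one_mul, Matrix.mul_one, Matrix.smul_mul, Matrix.mul_smul,
            smul_smul]
          rw [hQQ, smul_smul]
          module
        rw [hexp, hcoef, zero_smul, add_zero]
      have htrQ : Matrix.trace (W * Q) = s := by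
        rw [hsdef, hQ]
        simp only [Matrix.trace, Matrix.diag, Matrix.mul_apply, Matrix.vecMulVec_apply,
          dotProduct, Matrix.mulVec, Pi.star_apply]
        refine Finset.sum_congr rfl fun i _ => ?_
        rw [Finset.mul_sum]
        refine Finset.sum_congr rfl fun k _ => by ring
      have htr : Matrix.trace (W * V) = Matrix.trace W + t * s := by
        rw [hV, Matrix.mul_add, Matrix.mul_one, Matrix.trace_add, Matrix.mul_smul,
          Matrix.trace_smul, htrQ, smul_eq_mul]
      have hle := hmin V hVu
      rw [htr] at hle
      have hts : (t * s).re ≤ 0 := by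
        simp only [Complex.add_re] at hle; linarith
      have hrel : ((c - 1) * s) = (ν:ℂ) * (t * s) := by
        rw [ht]; field_simp
      rw [hrel]
      have : ((ν:ℂ) * (t*s)).re = ν * (t*s).re := by
        simp [Complex.mul_re, Complex.ofReal_re, Complex.ofReal_im]
      rw [this]
      exact mul_nonpos_of_nonneg_of_nonpos (le_of_lt hνpos) hts
    -- conclude
    by_cases hs0 : s = 0
    · simp [hs0]
    · have habs : (0:ℝ) < ‖s‖ := by
        simpa [norm_pos_iff] using hs0
      set c : ℂ := (starRingEnd ℂ) s / (‖s‖ : ℂ) with hcdef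
      have hc : ‖c‖ = 1 := by
        rw [hcdef, norm_div, Complex.norm_conj, Complex.norm_real, Real.norm_eq_abs, abs_of_pos habs,
          div_self (ne_of_gt habs)]
      have hcs : c * s = (‖s‖ : ℂ) := by
        rw [hcdef]
        rw [div_mul_eq_mul_div, mul_comm, Complex.mul_conj]
        rw [Complex.normSq_eq_norm_sq]
        push_cast
        rw [sq, mul_div_assoc, div_self (by exact_mod_cast ne_of_gt habs), mul_one]
      have hkey := key c hc
      rw [sub_mul, one_mul, hcs] at hkey
      simp only [Complex.sub_re, Complex.ofReal_re] at hkey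
      have h1 : ‖s‖ ≤ s.re := by linarith
      have h2 : s.re ≤ ‖s‖ := Complex.re_le_norm s
      have h3 : ‖s‖ = s.re := le_antisymm h1 h2
      constructor
      · have := Complex.sq_norm s
        rw [Complex.normSq_apply, h3] at this
        nlinarith
      · linarith

end Stmt15

open Stmt15 in
set_option maxHeartbeats 1000000 in
theorem stmt_15 {D r : ℕ} (X Y : Matrix (Fin D) (Fin r) ℂ)
    (Pu : Matrix (Fin D) (Fin D) ℂ)
    (hPherm : Pu.IsHermitian) (hPidem : Pu * Pu = Pu)
    (hPrange : LinearMap.range Pu.mulVecLin = LinearMap.range X.mulVecLin)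
    (R : Matrix (Fin r) (Fin r) ℂ)
    (hRunit : Rᴴ * R = 1)
    (hRmin : ∀ R' : Matrix (Fin r) (Fin r) ℂ, R'ᴴ * R' = 1 →
      frobNorm (X - Y * R) ≤ frobNorm (X - Y * R')) :
    frobNorm (X * (X - Y * R)ᴴ) ^ 2 ≤
      1 / 8 * frobNorm (X * Xᴴ - Y * Yᴴ) ^ 2
        + (3 + 1 / (2 * (Real.sqrt 2 - 1))) * frobNorm ((X * Xᴴ - Y * Yᴴ) * Pu) ^ 2 := by
  classical
  have hPH : Puᴴ = Pu := hPherm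
  have hRRH : R * Rᴴ = 1 := mul_eq_one_comm.mp hRunit
  set Z : Matrix (Fin D) (Fin r) ℂ := Y * R with hZdef
  have hYY : Y * Yᴴ = Z * Zᴴ := by
    rw [hZdef, Matrix.conjTranspose_mul, ← Matrix.mul_assoc, Matrix.mul_assoc Y R Rᴴ,
      hRRH, Matrix.mul_one]
  -- P fixes columns of X
  have hPX : Pu * X = X := by
    ext i j
    have hcol : X.mulVec (Pi.single j 1) ∈ LinearMap.range Pu.mulVecLin := by
      rw [hPrange]; exact ⟨Pi.single j 1, rfl⟩
    obtain ⟨w, hw⟩ := hcol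
    rw [Matrix.mulVecLin_apply] at hw
    have h1 : Pu.mulVec (X.mulVec (Pi.single j 1)) = X.mulVec (Pi.single j 1) := by
      rw [← hw, Matrix.mulVec_mulVec, hPidem]
    have h2 : (Pu * X).mulVec (Pi.single j 1) = X.mulVec (Pi.single j 1) := by
      rw [← Matrix.mulVec_mulVec, h1]
    have := congrFun h2 i
    simpa using this
  have hXHP : Xᴴ * Pu = Xᴴ := by
    rw [← hPH, ← Matrix.conjTranspose_mul, hPX]
  set Z1 : Matrix (Fin D) (Fin r) ℂ := Pu * Z with hZ1def
  set Z2 : Matrix (Fin D) (Fin r) ℂ := Z - Z1 with hZ2def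
  have hZ12 : Z = Z1 + Z2 := by rw [hZ2def]; abel
  have hXZ2 : Xᴴ * Z2 = 0 := by
    rw [hZ2def, Matrix.mul_sub, hZ1def, ← Matrix.mul_assoc Xᴴ Pu Z, hXHP, sub_self]
  have hZ2X : Z2ᴴ * X = 0 := by
    have := congrArg Matrix.conjTranspose hXZ2
    rwa [Matrix.conjTranspose_mul, Matrix.conjTranspose_conjTranspose,
      Matrix.conjTranspose_zero] at this
  have hZHP : Zᴴ * Pu = Z1ᴴ := by
    rw [hZ1def, show (Pu * Z)ᴴ = Zᴴ * Puᴴ from Matrix.conjTranspose_mul Pu Z, hPH]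
  have hZ1Z2 : Z1ᴴ * Z2 = 0 := by
    rw [show Z1ᴴ = Zᴴ * Pu from hZHP.symm, hZ2def, Matrix.mul_sub, hZ1def,
      ← Matrix.mul_assoc (Zᴴ * Pu) Pu Z, Matrix.mul_assoc Zᴴ Pu Pu, hPidem, sub_self]
  have hZ2Z1 : Z2ᴴ * Z1 = 0 := by
    have := congrArg Matrix.conjTranspose hZ1Z2
    rwa [Matrix.conjTranspose_mul, Matrix.conjTranspose_conjTranspose,
      Matrix.conjTranspose_zero] at this
  set W : Matrix (Fin r) (Fin r) ℂ := Xᴴ * Z with hWdef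
  have hXZ1 : Xᴴ * Z1 = W := by
    rw [hZ1def, ← Matrix.mul_assoc Xᴴ Pu Z, hXHP]
  -- Procrustes minimality gives trace inequality
  have hmin : ∀ V : Matrix (Fin r) (Fin r) ℂ, Vᴴ * V = 1 →
      (Matrix.trace (W * V)).re ≤ (Matrix.trace W).re := by
    intro V hV
    have hVVH : V * Vᴴ = 1 := mul_eq_one_comm.mp hV
    have hRV : (R * V)ᴴ * (R * V) = 1 := by
      rw [Matrix.conjTranspose_mul, Matrix.mul_assoc, ← Matrix.mul_assoc Rᴴ R V,
        hRunit, Matrix.one_mul, hV]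
    have h := hRmin (R * V) hRV
    have h2 : nsq (X - Z) ≤ nsq (X - Z * V) := by
      rw [← frobNorm_sq, ← frobNorm_sq]
      have : Y * (R * V) = Z * V := by rw [hZdef, Matrix.mul_assoc]
      rw [← this]
      exact pow_le_pow_left₀ (Real.sqrt_nonneg _) h 2
    rw [nsq_sub, nsq_sub] at h2
    have hZV : nsq (Z * V) = nsq Z := by
      unfold Stmt15.nsq
      rw [Matrix.conjTranspose_mul, Matrix.mul_assoc, ← Matrix.mul_assoc (Zᴴ) Z V]
      rw [Matrix.trace_mul_comm]
      rw [Matrix.mul_assoc, hVVH, Matrix.mul_one, Matrix.trace_mul_comm]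
    have hipZV : ip X (Z * V) = (Matrix.trace (W * V)).re := by
      unfold Stmt15.ip
      rw [← Matrix.mul_assoc, hWdef]
    have hipZ : ip X Z = (Matrix.trace W).re := by
      unfold Stmt15.ip; rw [hWdef]
    rw [hZV, hipZV, hipZ] at h2
    linarith
  have hquad := Stmt15.quadform_nonneg W hmin
  have hWH : Wᴴ = W := Stmt15.herm_of_quad W (fun v => (hquad v).1)
  -- r×r level objects
  set XX : Matrix (Fin r) (Fin r) ℂ := Xᴴ * X with hXXdef
  set ZZ : Matrix (Fin r) (Fin r) ℂ := Z1ᴴ * Z1 with hZZdef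
  set N : Matrix (Fin r) (Fin r) ℂ := XX - W with hNdef
  set K : Matrix (Fin r) (Fin r) ℂ := ZZ - W with hKdef
  set D1 : Matrix (Fin D) (Fin r) ℂ := X - Z1 with hD1def
  set G : Matrix (Fin r) (Fin r) ℂ := D1ᴴ * D1 with hGdef
  have hXXH : XXᴴ = XX := by
    rw [hXXdef, Matrix.conjTranspose_mul, Matrix.conjTranspose_conjTranspose]
  have hZZH : ZZᴴ = ZZ := by
    rw [hZZdef, Matrix.conjTranspose_mul, Matrix.conjTranspose_conjTranspose]
  have hNH : Nᴴ = N := by rw [hNdef, Matrix.conjTranspose_sub, hXXH, hWH]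
  have hZ1X : Z1ᴴ * X = W := by
    have := congrArg Matrix.conjTranspose hXZ1
    rwa [Matrix.conjTranspose_mul, Matrix.conjTranspose_conjTranspose, hWH] at this
  have hXXNW : XX = N + W := by rw [hNdef]; abel
  have hGNK : G = N + K := by
    rw [hGdef, hD1def, Matrix.conjTranspose_sub, Matrix.sub_mul, Matrix.mul_sub,
      Matrix.mul_sub, hXZ1, hZ1X, hNdef, hKdef, hXXdef, hZZdef]
    abel
  -- scalar quantities
  set n2 : ℝ := nsq N with hn2def
  set k2 : ℝ := nsq K with hk2def
  set g : ℝ := (Matrix.trace (W * G)).re with hgdef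
  set m2 : ℝ := nsq (X * Xᴴ - Z1 * Z1ᴴ) with hm2def
  set u2 : ℝ := nsq (X * Z2ᴴ) with hu2def
  set v2 : ℝ := nsq (Z1 * Z2ᴴ) with hv2def
  set w2 : ℝ := nsq (Z2 * Z2ᴴ) with hw2def
  -- (D) m2 = n2 + k2 + 2 g
  have tA : Matrix.trace ((X * Xᴴ) * (X * Xᴴ)) = Matrix.trace (XX * XX) := by
    rw [Matrix.mul_assoc X Xᴴ (X * Xᴴ), Matrix.trace_mul_comm X (Xᴴ * (X * Xᴴ))]
    rw [hXXdef]; simp only [Matrix.mul_assoc]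
  have tB : Matrix.trace ((Z1 * Z1ᴴ) * (Z1 * Z1ᴴ)) = Matrix.trace (ZZ * ZZ) := by
    rw [Matrix.mul_assoc Z1 Z1ᴴ (Z1 * Z1ᴴ), Matrix.trace_mul_comm Z1 (Z1ᴴ * (Z1 * Z1ᴴ))]
    rw [hZZdef]; simp only [Matrix.mul_assoc]
  have tC : Matrix.trace ((X * Xᴴ) * (Z1 * Z1ᴴ)) = Matrix.trace (W * W) := by
    rw [Matrix.mul_assoc X Xᴴ (Z1 * Z1ᴴ), Matrix.trace_mul_comm X (Xᴴ * (Z1 * Z1ᴴ))]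
    rw [show Xᴴ * (Z1 * Z1ᴴ) * X = (Xᴴ * Z1) * (Z1ᴴ * X) by simp only [Matrix.mul_assoc]]
    rw [hXZ1, hZ1X]
  have hm2eq : m2 = (Matrix.trace (XX * XX)).re + (Matrix.trace (ZZ * ZZ)).re
      - 2 * (Matrix.trace (W * W)).re := by
    rw [hm2def]
    unfold Stmt15.nsq
    rw [Matrix.conjTranspose_sub]
    rw [show (X * Xᴴ)ᴴ = X * Xᴴ by
      rw [Matrix.conjTranspose_mul, Matrix.conjTranspose_conjTranspose]]
    rw [show (Z1 * Z1ᴴ)ᴴ = Z1 * Z1ᴴ by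
      rw [Matrix.conjTranspose_mul, Matrix.conjTranspose_conjTranspose]]
    rw [Matrix.sub_mul, Matrix.mul_sub, Matrix.mul_sub, Matrix.trace_sub, Matrix.trace_sub,
      Matrix.trace_sub]
    rw [Matrix.trace_mul_comm (Z1 * Z1ᴴ) (X * Xᴴ)]
    rw [tA, tB, tC]
    simp only [Complex.sub_re]
    ring
  have hn2eq : n2 = (Matrix.trace (XX * XX)).re - 2 * (Matrix.trace (XX * W)).re
      + (Matrix.trace (W * W)).re := by
    rw [hn2def]
    unfold Stmt15.nsq
    rw [hNH, hNdef, Matrix.sub_mul, Matrix.mul_sub, Matrix.mul_sub, Matrix.trace_sub,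
      Matrix.trace_sub, Matrix.trace_sub, Matrix.trace_mul_comm W XX]
    simp only [Complex.sub_re]
    ring
  have hk2eq : k2 = (Matrix.trace (ZZ * ZZ)).re - 2 * (Matrix.trace (ZZ * W)).re
      + (Matrix.trace (W * W)).re := by
    rw [hk2def]
    unfold Stmt15.nsq
    rw [show Kᴴ = K by rw [hKdef, Matrix.conjTranspose_sub, hZZH, hWH]]
    rw [hKdef, Matrix.sub_mul, Matrix.mul_sub, Matrix.mul_sub, Matrix.trace_sub,
      Matrix.trace_sub, Matrix.trace_sub, Matrix.trace_mul_comm W ZZ]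
    simp only [Complex.sub_re]
    ring
  have hgeq : g = (Matrix.trace (XX * W)).re + (Matrix.trace (ZZ * W)).re
      - 2 * (Matrix.trace (W * W)).re := by
    rw [hgdef, hGNK, Matrix.mul_add, Matrix.trace_add, hNdef, hKdef, Matrix.mul_sub,
      Matrix.mul_sub, Matrix.trace_sub, Matrix.trace_sub,
      Matrix.trace_mul_comm W XX, Matrix.trace_mul_comm W ZZ]
    simp only [Complex.add_re, Complex.sub_re]
    ring
  have hD : m2 = n2 + k2 + 2 * g := by rw [hm2eq, hn2eq, hk2eq, hgeq]; ring
  -- (F) g ≥ 0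
  have hg0 : 0 ≤ g := by
    have hgsum : Matrix.trace (W * G) =
        ∑ i, ((star (star (D1 i))) ⬝ᵥ (W *ᵥ (star (D1 i)))) := by
      rw [hGdef, ← Matrix.mul_assoc, Matrix.trace_mul_comm (W * D1ᴴ) D1]
      simp only [Matrix.trace, Matrix.diag, Matrix.mul_apply, dotProduct,
        Matrix.mulVec, Matrix.conjTranspose_apply, Pi.star_apply, star_star]
    rw [hgdef, hgsum, Complex.re_sum]
    exact Finset.sum_nonneg fun i _ => (hquad (star (D1 i))).2
  -- (E) nsq (X * D1ᴴ) = n2 + (trace (N*K)).re + g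
  have hS1eq : nsq (X * D1ᴴ) = n2 + (Matrix.trace (N * K)).re + g := by
    unfold Stmt15.nsq
    rw [show (X * D1ᴴ)ᴴ = D1 * Xᴴ by
      rw [Matrix.conjTranspose_mul, Matrix.conjTranspose_conjTranspose]]
    rw [show D1 * Xᴴ * (X * D1ᴴ) = D1 * (XX * D1ᴴ) by
      rw [hXXdef]; simp only [Matrix.mul_assoc]]
    rw [Matrix.trace_mul_comm D1 (XX * D1ᴴ)]
    rw [show XX * D1ᴴ * D1 = XX * G by rw [hGdef, Matrix.mul_assoc]]
    rw [hXXNW, hGNK, Matrix.add_mul, Matrix.mul_add, Matrix.mul_add, Matrix.trace_add,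
      Matrix.trace_add, Matrix.trace_add]
    have hNN : (Matrix.trace (N * N)).re = n2 := by
      rw [hn2def]; unfold Stmt15.nsq; rw [hNH]
    have hWNK : (Matrix.trace (W * N)).re + (Matrix.trace (W * K)).re = g := by
      rw [hgdef, hGNK, Matrix.mul_add, Matrix.trace_add, Complex.add_re]
    simp only [Complex.add_re]
    rw [hNN]
    linarith [hWNK]
  have htNK : (Matrix.trace (N * K)).re = ip N K := by
    unfold Stmt15.ip; rw [hNH]
  -- (A) splitting of the target norm
  have hXmZ : X - Z = D1 - Z2 := by rw [hD1def, hZ2def]; abel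
  have hZ2D1 : Z2ᴴ * D1 = 0 := by
    rw [hD1def, Matrix.mul_sub, hZ2X, hZ2Z1, sub_self]
  have hA : nsq (X * (X - Z)ᴴ) = nsq (X * D1ᴴ) + u2 := by
    rw [hXmZ, Matrix.conjTranspose_sub, Matrix.mul_sub, nsq_sub]
    have hcross : ip (X * D1ᴴ) (X * Z2ᴴ) = 0 := by
      unfold Stmt15.ip
      rw [show (X * D1ᴴ)ᴴ = D1 * Xᴴ by
        rw [Matrix.conjTranspose_mul, Matrix.conjTranspose_conjTranspose]]
      rw [Matrix.trace_mul_comm (D1 * Xᴴ) (X * Z2ᴴ)]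
      rw [show X * Z2ᴴ * (D1 * Xᴴ) = X * ((Z2ᴴ * D1) * Xᴴ) by simp only [Matrix.mul_assoc]]
      rw [hZ2D1, Matrix.zero_mul, Matrix.mul_zero, Matrix.trace_zero]
      simp
    rw [hcross, hu2def]
    ring
  -- (B) nsq M = m2 + 2 v2 + w2
  have hM11H : (X * Xᴴ - Z1 * Z1ᴴ)ᴴ = X * Xᴴ - Z1 * Z1ᴴ := by
    rw [Matrix.conjTranspose_sub, Matrix.conjTranspose_mul,
      Matrix.conjTranspose_conjTranspose, Matrix.conjTranspose_mul,
      Matrix.conjTranspose_conjTranspose]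
  have hM11Z2 : (X * Xᴴ - Z1 * Z1ᴴ) * Z2 = 0 := by
    rw [Matrix.sub_mul, Matrix.mul_assoc, hXZ2, Matrix.mul_assoc, hZ1Z2,
      Matrix.mul_zero, Matrix.mul_zero, sub_self]
  have hZ2M11 : Z2ᴴ * (X * Xᴴ - Z1 * Z1ᴴ) = 0 := by
    rw [Matrix.mul_sub, ← Matrix.mul_assoc Z2ᴴ X Xᴴ, hZ2X, ← Matrix.mul_assoc Z2ᴴ Z1 Z1ᴴ,
      hZ2Z1, Matrix.zero_mul, Matrix.zero_mul, sub_self]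
  have ipM11C : ip (X * Xᴴ - Z1 * Z1ᴴ) (Z1 * Z2ᴴ) = 0 := by
    unfold Stmt15.ip
    rw [hM11H, Matrix.trace_mul_comm (X * Xᴴ - Z1 * Z1ᴴ) (Z1 * Z2ᴴ)]
    rw [show Z1 * Z2ᴴ * (X * Xᴴ - Z1 * Z1ᴴ) = Z1 * (Z2ᴴ * (X * Xᴴ - Z1 * Z1ᴴ)) from
      Matrix.mul_assoc _ _ _]
    rw [hZ2M11, Matrix.mul_zero, Matrix.trace_zero]
    simp
  have ipM11CH : ip (X * Xᴴ - Z1 * Z1ᴴ) (Z2 * Z1ᴴ) = 0 := by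
    unfold Stmt15.ip
    rw [hM11H, show (X * Xᴴ - Z1 * Z1ᴴ) * (Z2 * Z1ᴴ) = ((X * Xᴴ - Z1 * Z1ᴴ) * Z2) * Z1ᴴ from
      (Matrix.mul_assoc _ _ _).symm]
    rw [hM11Z2, Matrix.zero_mul, Matrix.trace_zero]
    simp
  have ipM11Dm : ip (X * Xᴴ - Z1 * Z1ᴴ) (Z2 * Z2ᴴ) = 0 := by
    unfold Stmt15.ip
    rw [hM11H, show (X * Xᴴ - Z1 * Z1ᴴ) * (Z2 * Z2ᴴ) = ((X * Xᴴ - Z1 * Z1ᴴ) * Z2) * Z2ᴴ from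
      (Matrix.mul_assoc _ _ _).symm]
    rw [hM11Z2, Matrix.zero_mul, Matrix.trace_zero]
    simp
  have hCHeq : (Z1 * Z2ᴴ)ᴴ = Z2 * Z1ᴴ := by
    rw [Matrix.conjTranspose_mul, Matrix.conjTranspose_conjTranspose]
  have ipCCH : ip (Z1 * Z2ᴴ) (Z2 * Z1ᴴ) = 0 := by
    unfold Stmt15.ip
    rw [hCHeq]
    rw [show Z2 * Z1ᴴ * (Z2 * Z1ᴴ) = Z2 * ((Z1ᴴ * Z2) * Z1ᴴ) by simp only [Matrix.mul_assoc]]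
    rw [hZ1Z2, Matrix.zero_mul, Matrix.mul_zero, Matrix.trace_zero]
    simp
  have ipCHC : ip (Z2 * Z1ᴴ) (Z1 * Z2ᴴ) = 0 := by
    rw [ip_comm]; exact ipCCH
  have ipCDm : ip (Z1 * Z2ᴴ) (Z2 * Z2ᴴ) = 0 := by
    unfold Stmt15.ip
    rw [hCHeq]
    rw [show Z2 * Z1ᴴ * (Z2 * Z2ᴴ) = Z2 * ((Z1ᴴ * Z2) * Z2ᴴ) by simp only [Matrix.mul_assoc]]
    rw [hZ1Z2, Matrix.zero_mul, Matrix.mul_zero, Matrix.trace_zero]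
    simp
  have ipCHDm : ip (Z2 * Z1ᴴ) (Z2 * Z2ᴴ) = 0 := by
    unfold Stmt15.ip
    rw [show (Z2 * Z1ᴴ)ᴴ = Z1 * Z2ᴴ by
      rw [Matrix.conjTranspose_mul, Matrix.conjTranspose_conjTranspose]]
    rw [Matrix.trace_mul_comm (Z1 * Z2ᴴ) (Z2 * Z2ᴴ)]
    rw [show Z2 * Z2ᴴ * (Z1 * Z2ᴴ) = Z2 * ((Z2ᴴ * Z1) * Z2ᴴ) by simp only [Matrix.mul_assoc]]
    rw [hZ2Z1, Matrix.zero_mul, Matrix.mul_zero, Matrix.trace_zero]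
    simp
  have hnsqCH : nsq (Z2 * Z1ᴴ) = v2 := by
    rw [← hCHeq, nsq_conjTranspose, hv2def]
  have hMdecomp : X * Xᴴ - Z * Zᴴ =
      (((X * Xᴴ - Z1 * Z1ᴴ) - Z1 * Z2ᴴ) - Z2 * Z1ᴴ) - Z2 * Z2ᴴ := by
    rw [hZ12, Matrix.conjTranspose_add, Matrix.add_mul, Matrix.mul_add, Matrix.mul_add]
    abel
  have hB : nsq (X * Xᴴ - Z * Zᴴ) = m2 + 2 * v2 + w2 := by
    rw [hMdecomp, nsq_sub4 (X * Xᴴ - Z1 * Z1ᴴ) (Z1 * Z2ᴴ) (Z2 * Z1ᴴ) (Z2 * Z2ᴴ)]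
    rw [ipM11C, ipM11CH, ipM11Dm, ipCCH, ipCDm, ipCHDm, hnsqCH]
    rw [← hm2def, ← hv2def, ← hw2def]
    ring
  -- (C) nsq (M * Pu) = m2 + v2
  have hMP : (X * Xᴴ - Z * Zᴴ) * Pu = (X * Xᴴ - Z1 * Z1ᴴ) - Z2 * Z1ᴴ := by
    rw [Matrix.sub_mul, Matrix.mul_assoc X Xᴴ Pu, hXHP, Matrix.mul_assoc Z Zᴴ Pu, hZHP]
    rw [show Z * Z1ᴴ = (Z1 + Z2) * Z1ᴴ by rw [← hZ12]]
    rw [Matrix.add_mul]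
    abel
  have hC2 : nsq ((X * Xᴴ - Z * Zᴴ) * Pu) = m2 + v2 := by
    rw [hMP, nsq_sub (X * Xᴴ - Z1 * Z1ᴴ) (Z2 * Z1ᴴ), ipM11CH, hnsqCH, ← hm2def]
    ring
  -- (I,J,K) bound on u2
  have hu2eq : u2 = (Matrix.trace (N * (Z2ᴴ * Z2))).re
      + (Matrix.trace (W * (Z2ᴴ * Z2))).re := by
    rw [hu2def]
    unfold Stmt15.nsq
    rw [show (X * Z2ᴴ)ᴴ = Z2 * Xᴴ by
      rw [Matrix.conjTranspose_mul, Matrix.conjTranspose_conjTranspose]]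
    rw [show Z2 * Xᴴ * (X * Z2ᴴ) = Z2 * (XX * Z2ᴴ) by rw [hXXdef]; simp only [Matrix.mul_assoc]]
    rw [Matrix.trace_mul_comm Z2 (XX * Z2ᴴ)]
    rw [show XX * Z2ᴴ * Z2 = XX * (Z2ᴴ * Z2) by simp only [Matrix.mul_assoc]]
    rw [hXXNW, Matrix.add_mul, Matrix.trace_add, Complex.add_re]
  have hJ : (Matrix.trace (N * (Z2ᴴ * Z2))).re ≤ Real.sqrt n2 * Real.sqrt w2 := by
    have h1 : (Matrix.trace (N * (Z2ᴴ * Z2))).re = ip N (Z2ᴴ * Z2) := by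
      unfold Stmt15.ip; rw [hNH]
    have h2 : nsq (Z2ᴴ * Z2) = w2 := by
      rw [hw2def]
      unfold Stmt15.nsq
      rw [show (Z2ᴴ * Z2)ᴴ = Z2ᴴ * Z2 by
        rw [Matrix.conjTranspose_mul, Matrix.conjTranspose_conjTranspose]]
      rw [show (Z2 * Z2ᴴ)ᴴ = Z2 * Z2ᴴ by
        rw [Matrix.conjTranspose_mul, Matrix.conjTranspose_conjTranspose]]
      rw [show Z2ᴴ * Z2 * (Z2ᴴ * Z2) = Z2ᴴ * (Z2 * (Z2ᴴ * Z2)) by simp only [Matrix.mul_assoc]]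
      rw [Matrix.trace_mul_comm (Z2ᴴ) (Z2 * (Z2ᴴ * Z2))]
      simp only [Matrix.mul_assoc]
    rw [h1, ← h2, hn2def]
    exact ip_cs N (Z2ᴴ * Z2)
  have hK : (Matrix.trace (W * (Z2ᴴ * Z2))).re ≤ Real.sqrt u2 * Real.sqrt v2 := by
    have h1 : (Matrix.trace (W * (Z2ᴴ * Z2))).re = ip (X * Z2ᴴ) (Z1 * Z2ᴴ) := by
      unfold Stmt15.ip
      rw [show (X * Z2ᴴ)ᴴ = Z2 * Xᴴ by
        rw [Matrix.conjTranspose_mul, Matrix.conjTranspose_conjTranspose]]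
      rw [show Z2 * Xᴴ * (Z1 * Z2ᴴ) = Z2 * ((Xᴴ * Z1) * Z2ᴴ) by simp only [Matrix.mul_assoc]]
      rw [hXZ1, Matrix.trace_mul_comm Z2 (W * Z2ᴴ)]
      rw [Matrix.mul_assoc W Z2ᴴ Z2]
    rw [h1]
    have := ip_cs (X * Z2ᴴ) (Z1 * Z2ᴴ)
    rw [← hu2def, ← hv2def] at this
    exact this
  -- nonnegativity
  have hn2n : 0 ≤ n2 := by rw [hn2def]; exact nsq_nonneg N
  have hk2n : 0 ≤ k2 := by rw [hk2def]; exact nsq_nonneg K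
  have hu2n : 0 ≤ u2 := by rw [hu2def]; exact nsq_nonneg _
  have hv2n : 0 ≤ v2 := by rw [hv2def]; exact nsq_nonneg _
  have hw2n : 0 ≤ w2 := by rw [hw2def]; exact nsq_nonneg _
  have hm2n : 0 ≤ m2 := by rw [hm2def]; exact nsq_nonneg _
  -- final assembly
  have hgoalL : frobNorm (X * (X - Y * R)ᴴ) ^ 2 = nsq (X * D1ᴴ) + u2 := by
    rw [frobNorm_sq, ← hZdef, hA]
  have hgoalR1 : frobNorm (X * Xᴴ - Y * Yᴴ) ^ 2 = m2 + 2 * v2 + w2 := by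
    rw [frobNorm_sq, hYY, hB]
  have hgoalR2 : frobNorm ((X * Xᴴ - Y * Yᴴ) * Pu) ^ 2 = m2 + v2 := by
    rw [frobNorm_sq, hYY, hC2]
  rw [hgoalL, hgoalR1, hgoalR2]
  -- real analysis endgame
  set sN := Real.sqrt n2 with hsN
  set sK := Real.sqrt k2 with hsK
  set sU := Real.sqrt u2 with hsU
  set sV := Real.sqrt v2 with hsV
  set sW := Real.sqrt w2 with hsW
  have hsN2 : sN ^ 2 = n2 := Real.sq_sqrt hn2n
  have hsK2 : sK ^ 2 = k2 := Real.sq_sqrt hk2n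
  have hsU2 : sU ^ 2 = u2 := Real.sq_sqrt hu2n
  have hsV2 : sV ^ 2 = v2 := Real.sq_sqrt hv2n
  have hsW2 : sW ^ 2 = w2 := Real.sq_sqrt hw2n
  have hsNn : 0 ≤ sN := Real.sqrt_nonneg _
  have hsKn : 0 ≤ sK := Real.sqrt_nonneg _
  have hsUn : 0 ≤ sU := Real.sqrt_nonneg _
  have hsVn : 0 ≤ sV := Real.sqrt_nonneg _
  have hsWn : 0 ≤ sW := Real.sqrt_nonneg _
  have hcs1 : ip N K ≤ sN * sK := ip_cs N K
  clear_value Z Z1 Z2 W XX ZZ N K D1 G n2 k2 g m2 u2 v2 w2 sN sK sU sV sW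
  -- S1 bound
  have hS1b : nsq (X * D1ᴴ) ≤ 3 / 2 * m2 := by
    rw [hS1eq, htNK]
    have h2 : sN * sK ≤ 1 / 2 * n2 + 1 / 2 * k2 := by
      have hexp : (sN - sK) ^ 2 = n2 - 2 * (sN * sK) + k2 := by
        rw [← hsN2, ← hsK2]; ring
      have h0 := sq_nonneg (sN - sK)
      rw [hexp] at h0
      linarith
    linarith [hcs1, h2, hD, hg0, hk2n]
  -- u2 bound
  have hu2b : u2 ≤ 800 / 289 * n2 + 1 / 8 * w2 + 100 / 51 * v2 := by
    have h1 : u2 ≤ sN * sW + sU * sV := by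
      rw [hu2eq]; linarith [hJ, hK]
    have h2 : sU * sV ≤ 3 / 20 * u2 + 5 / 3 * v2 := by
      have hexp : (3 * sU - 10 * sV) ^ 2 = 9 * u2 - 60 * (sU * sV) + 100 * v2 := by
        rw [← hsU2, ← hsV2]; ring
      have h0 := sq_nonneg (3 * sU - 10 * sV)
      rw [hexp] at h0
      linarith
    have h3 : sN * sW ≤ 40 / 17 * n2 + 17 / 160 * w2 := by
      have hexp : (80 * sN - 17 * sW) ^ 2 = 6400 * n2 - 2720 * (sN * sW) + 289 * w2 := by
        rw [← hsN2, ← hsW2]; ring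
      have h0 := sq_nonneg (80 * sN - 17 * sW)
      rw [hexp] at h0
      linarith
    linarith [h1, h2, h3]
  have hn2m2 : n2 ≤ m2 := by linarith [hD, hg0, hk2n]
  -- sqrt 2 bounds
  have hs2sq : Real.sqrt 2 ^ 2 = 2 := Real.sq_sqrt (by norm_num)
  have hs2n : 0 ≤ Real.sqrt 2 := Real.sqrt_nonneg 2
  have hs2ub : Real.sqrt 2 ≤ 1.42 := by
    have hexp : (Real.sqrt 2 - 1.42) ^ 2 = 2 - 2.84 * Real.sqrt 2 + 2.0164 := by
      rw [sub_sq, hs2sq]; norm_num; ring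
    have h0 := sq_nonneg (Real.sqrt 2 - 1.42)
    rw [hexp] at h0
    linarith
  have hs2lb : (1 : ℝ) < Real.sqrt 2 := by
    rw [show (1 : ℝ) = Real.sqrt 1 from (Real.sqrt_one).symm]
    exact Real.sqrt_lt_sqrt (by norm_num) (by norm_num)
  have hdenpos : 0 < 2 * (Real.sqrt 2 - 1) := by linarith
  have hcge : (25 / 21 : ℝ) ≤ 1 / (2 * (Real.sqrt 2 - 1)) := by
    have h1 : 2 * (Real.sqrt 2 - 1) ≤ 21 / 25 := by linarith
    have h2 := one_div_le_one_div_of_le hdenpos h1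
    calc (25 / 21 : ℝ) = 1 / (21 / 25) := by norm_num
      _ ≤ 1 / (2 * (Real.sqrt 2 - 1)) := by
          apply one_div_le_one_div_of_le hdenpos h1
  have hq1 : 25 / 21 * m2 ≤ 1 / (2 * (Real.sqrt 2 - 1)) * m2 :=
    mul_le_mul_of_nonneg_right hcge hm2n
  have hq2 : 25 / 21 * v2 ≤ 1 / (2 * (Real.sqrt 2 - 1)) * v2 :=
    mul_le_mul_of_nonneg_right hcge hv2n
  linarith [hS1b, hu2b, hn2m2, hq1, hq2, hm2n, hv2n, hw2n]
end

section
/- Let U, X ∈ ℂ^{D×r} with X of full column rank r, and let R be a unitary r×r matrix attaining min_{R' unitary} ‖U − X R'‖_F. Then ‖U − X R‖_F² ≤ (1/(2(√2 − 1)·σ_r(X)²))·‖U U^H − X X^H‖_F². -/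
set_option maxHeartbeats 1000000


open Matrix
open scoped BigOperators ComplexOrder

namespace Stmt16
variable {m n : ℕ}

lemma trace_conj_mul (A B : Matrix (Fin m) (Fin n) ℂ) :
    Matrix.trace (Aᴴ * B) = ∑ j, ∑ i, (starRingEnd ℂ) (A i j) * B i j := by
  simp [Matrix.trace, Matrix.diag, Matrix.mul_apply, Matrix.conjTranspose_apply]

lemma frob_nonneg (A : Matrix (Fin m) (Fin n) ℂ) : 0 ≤ frobNorm A := Real.sqrt_nonneg _

lemma frob_sq (A : Matrix (Fin m) (Fin n) ℂ) :
    frobNorm A ^ 2 = (Matrix.trace (Aᴴ * A)).re := by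
  rw [frobNorm, Real.sq_sqrt (by positivity), trace_conj_mul, Complex.re_sum]
  rw [Finset.sum_comm]
  congr 1; ext i
  rw [Complex.re_sum]
  congr 1; ext j
  rw [Complex.conj_mul']
  simp [← Complex.ofReal_pow]

variable {m n : ℕ}

lemma frob_eq (A : Matrix (Fin m) (Fin n) ℂ) :
    frobNorm A = Real.sqrt (∑ j, ∑ i, ‖A i j‖ ^ 2) := by
  rw [frobNorm, Finset.sum_comm]

lemma cauchy (A B : Matrix (Fin m) (Fin n) ℂ) :
    |(Matrix.trace (Aᴴ * B)).re| ≤ frobNorm A * frobNorm B := by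
  have h1 : |(Matrix.trace (Aᴴ * B)).re| ≤ ∑ j, ∑ i, ‖A i j‖ * ‖B i j‖ := by
    refine le_trans (Complex.abs_re_le_norm _) ?_
    rw [trace_conj_mul]
    refine le_trans (norm_sum_le _ _) ?_
    refine Finset.sum_le_sum fun j _ => ?_
    refine le_trans (norm_sum_le _ _) ?_
    refine Finset.sum_le_sum fun i _ => ?_
    simp [norm_mul]
  refine le_trans h1 ?_
  have h2 := Finset.sum_mul_sq_le_sq_mul_sq Finset.univ
    (fun p : Fin n × Fin m => ‖A p.2 p.1‖) (fun p : Fin n × Fin m => ‖B p.2 p.1‖)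
  rw [Fintype.sum_prod_type, Fintype.sum_prod_type, Fintype.sum_prod_type] at h2
  have hge : (0:ℝ) ≤ ∑ j, ∑ i, ‖A i j‖ * ‖B i j‖ := by positivity
  have h3 : Real.sqrt ((∑ j, ∑ i, ‖A i j‖ * ‖B i j‖) ^ 2) ≤
      Real.sqrt ((∑ j, ∑ i, ‖A i j‖ ^ 2) * ∑ j, ∑ i, ‖B i j‖ ^ 2) := Real.sqrt_le_sqrt h2
  rw [Real.sqrt_sq hge, Real.sqrt_mul (by positivity)] at h3
  rw [frob_eq, frob_eq]
  exact h3



variable {m n : ℕ}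

lemma conj_mul_self_re (z : ℂ) : ((starRingEnd ℂ) z * z).re = ‖z‖ ^ 2 := by
  rw [Complex.conj_mul', ← Complex.ofReal_pow, Complex.ofReal_re]

lemma conj_mul_smul_re (c : ℝ) (z : ℂ) : ((starRingEnd ℂ) z * ((c:ℂ) * z)).re = c * ‖z‖ ^ 2 := by
  have h : (starRingEnd ℂ) z * ((c:ℂ) * z) = (c:ℂ) * ((starRingEnd ℂ) z * z) := by ring
  rw [h, Complex.conj_mul', ← Complex.ofReal_pow, ← Complex.ofReal_mul, Complex.ofReal_re]

lemma trace_CGC (C : Matrix (Fin m) (Fin n) ℂ) (G : Matrix (Fin n) (Fin n) ℂ) :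
    Matrix.trace (C * G * Cᴴ) = ∑ i, star (star (C i)) ⬝ᵥ (G *ᵥ star (C i)) := by
  simp only [Matrix.trace, Matrix.diag, Matrix.mul_apply, Matrix.conjTranspose_apply,
    dotProduct, Matrix.mulVec, star_star, Pi.star_apply]
  congr 1; ext i
  simp_rw [Finset.sum_mul, Finset.mul_sum, mul_assoc]
  rw [Finset.sum_comm]

lemma quad_ge (G : Matrix (Fin n) (Fin n) ℂ) (hG : G.IsHermitian) (c : ℝ)
    (hc : ∀ i, c ≤ hG.eigenvalues i) (x : Fin n → ℂ) :
    c * (star x ⬝ᵥ x).re ≤ (star x ⬝ᵥ (G *ᵥ x)).re := by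
  classical
  set Uu : Matrix (Fin n) (Fin n) ℂ := (hG.eigenvectorUnitary : Matrix (Fin n) (Fin n) ℂ) with hUu
  set y : Fin n → ℂ := (star Uu) *ᵥ x with hy
  have hsy : star y = star x ᵥ* Uu := by
    rw [hy, Matrix.star_mulVec]
    simp [Matrix.star_eq_conjTranspose]
  have hxy : star x ⬝ᵥ (G *ᵥ x) =
      star y ⬝ᵥ (Matrix.diagonal (RCLike.ofReal ∘ hG.eigenvalues) *ᵥ y) := by
    conv_lhs => rw [hG.spectral_theorem, Unitary.conjStarAlgAut_apply]
    rw [← Matrix.mulVec_mulVec, ← Matrix.mulVec_mulVec, Matrix.dotProduct_mulVec, ← hsy, ← hUu,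
      ← hy]
  have hyx : star y ⬝ᵥ y = star x ⬝ᵥ x := by
    rw [hsy, hy, ← Matrix.dotProduct_mulVec, Matrix.mulVec_mulVec,
      Matrix.mem_unitaryGroup_iff.mp hG.eigenvectorUnitary.2, Matrix.one_mulVec]
  have hdiag : (star y ⬝ᵥ (Matrix.diagonal (RCLike.ofReal ∘ hG.eigenvalues) *ᵥ y)).re
      = ∑ i, hG.eigenvalues i * ‖y i‖ ^ 2 := by
    simp only [dotProduct, Matrix.mulVec_diagonal, Pi.star_apply, Complex.re_sum,
      Function.comp_apply, RCLike.star_def]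
    exact Finset.sum_congr rfl fun i _ => conj_mul_smul_re _ _
  have hxx : (star x ⬝ᵥ x).re = ∑ i, ‖y i‖ ^ 2 := by
    rw [← hyx]
    simp only [dotProduct, Pi.star_apply, Complex.re_sum, RCLike.star_def]
    exact Finset.sum_congr rfl fun i _ => conj_mul_self_re _
  rw [hxy, hdiag, hxx, Finset.mul_sum]
  refine Finset.sum_le_sum fun i _ => ?_
  nlinarith [sq_nonneg (‖y i‖), hc i]



variable {n : ℕ}

lemma opt_psd (P : Matrix (Fin n) (Fin n) ℂ)
    (hopt : ∀ V : Matrix (Fin n) (Fin n) ℂ, Vᴴ * V = 1 →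
      (Matrix.trace (Vᴴ * P)).re ≤ (Matrix.trace P).re)
    (x : Fin n → ℂ) :
    (star x ⬝ᵥ (P *ᵥ x)).im = 0 ∧ 0 ≤ (star x ⬝ᵥ (P *ᵥ x)).re := by
  classical
  set q : ℂ := star x ⬝ᵥ (P *ᵥ x) with hq
  by_cases hx : x = 0
  · simp [hq, hx]
  set nr : ℝ := ∑ i, ‖x i‖ ^ 2 with hnr
  have hnrpos : 0 < nr := by
    obtain ⟨i, hi⟩ := Function.ne_iff.mp hx
    exact Finset.sum_pos' (fun j _ => by positivity)
      ⟨i, Finset.mem_univ i, pow_pos (norm_pos_iff.mpr hi) 2⟩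
  have hnc : star x ⬝ᵥ x = (nr : ℂ) := by
    rw [hnr]
    push_cast
    simp only [dotProduct, Pi.star_apply, RCLike.star_def]
    refine Finset.sum_congr rfl fun i _ => ?_
    rw [Complex.conj_mul', ← Complex.ofReal_pow]
  have key : ∀ ω : ℂ, (starRingEnd ℂ) ω * ω = 1 → 0 ≤ ((1 - (starRingEnd ℂ) ω) * q).re := by
    intro ω hω
    have hnr0 : (nr : ℂ) ≠ 0 := by exact_mod_cast (Complex.ofReal_ne_zero).mpr hnrpos.ne'
    set c : ℂ := (1 - ω) * ((nr : ℂ))⁻¹ with hc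
    set M : Matrix (Fin n) (Fin n) ℂ := Matrix.vecMulVec x (star x) with hM
    have hMH : Mᴴ = M := by
      ext i j
      simp [hM, Matrix.conjTranspose_apply, Matrix.vecMulVec_apply, mul_comm]
    have hMM : M * M = (nr : ℂ) • M := by
      ext i j
      simp only [hM, Matrix.mul_apply, Matrix.vecMulVec_apply, Matrix.smul_apply,
        Pi.star_apply, smul_eq_mul]
      rw [← hnc]
      simp only [dotProduct, Pi.star_apply, RCLike.star_def]
      rw [Finset.sum_mul]
      refine Finset.sum_congr rfl fun k _ => ?_
      ring
    set V : Matrix (Fin n) (Fin n) ℂ := 1 - c • M with hV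
    have hscal : (starRingEnd ℂ) c * (c * (nr:ℂ)) = c + (starRingEnd ℂ) c := by
      rw [hc]
      simp only [_root_.map_mul, _root_.map_sub, _root_.map_one, map_inv₀,
        Complex.conj_ofReal]
      field_simp
      linear_combination hω
    have hVH : Vᴴ = 1 - (starRingEnd ℂ) c • M := by
      rw [hV, Matrix.conjTranspose_sub, Matrix.conjTranspose_smul, Matrix.conjTranspose_one, hMH]
      rfl
    have hVu : Vᴴ * V = 1 := by
      have hscal2 : c * ((starRingEnd ℂ) c * (nr:ℂ)) = c + (starRingEnd ℂ) c := by
        rw [← hscal]; ring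
      rw [hVH, hV]
      simp only [sub_mul, mul_sub, one_mul, mul_one, smul_mul_assoc, mul_smul_comm, hMM,
        smul_smul, smul_sub]
      rw [show c * ((starRingEnd ℂ) c * (nr:ℂ)) = c + (starRingEnd ℂ) c from hscal2, add_smul]
      abel
    have hle := hopt V hVu
    have htrMP : Matrix.trace (M * P) = q := by
      rw [hq]
      simp only [hM, Matrix.trace, Matrix.diag, Matrix.mul_apply, Matrix.vecMulVec_apply,
        dotProduct, Matrix.mulVec, Pi.star_apply, RCLike.star_def]
      rw [Finset.sum_comm]
      refine Finset.sum_congr rfl fun j _ => ?_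
      rw [Finset.mul_sum]
      refine Finset.sum_congr rfl fun i _ => ?_
      ring
    have htr : Matrix.trace (Vᴴ * P) = Matrix.trace P - (starRingEnd ℂ) c * q := by
      rw [hVH, sub_mul, one_mul, Matrix.smul_mul, Matrix.trace_sub, Matrix.trace_smul, htrMP,
        smul_eq_mul]
    rw [htr, Complex.sub_re, sub_le_self_iff] at hle
    have hrw : (starRingEnd ℂ) c * q = ((nr⁻¹ : ℝ) : ℂ) * ((1 - (starRingEnd ℂ) ω) * q) := by
      rw [hc]
      simp only [_root_.map_mul, _root_.map_sub, _root_.map_one, map_inv₀,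
        Complex.conj_ofReal]
      push_cast
      ring
    rw [hrw, Complex.re_ofReal_mul] at hle
    have hinv : (0:ℝ) < nr⁻¹ := by positivity
    nlinarith
  by_cases hq0 : q = 0
  · simp [hq0]
  have hqn : (0:ℝ) < ‖q‖ := norm_pos_iff.mpr hq0
  have hne : ((‖q‖:ℝ):ℂ) ≠ 0 := by exact_mod_cast hqn.ne'
  have hcq : (starRingEnd ℂ) q * q = ((‖q‖:ℝ):ℂ) * ((‖q‖:ℝ):ℂ) := by
    rw [Complex.conj_mul', ← Complex.ofReal_mul, ← Complex.ofReal_pow, sq]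
  have hω1 : (starRingEnd ℂ) (q / (‖q‖ : ℂ)) * (q / (‖q‖ : ℂ)) = 1 := by
    rw [map_div₀, Complex.conj_ofReal, div_mul_div_comm, hcq, div_self (by
      exact mul_ne_zero hne hne)]
  have h2 := key _ hω1
  have hωq : ((1 - (starRingEnd ℂ) (q / (‖q‖ : ℂ))) * q) = q - (‖q‖ : ℂ) := by
    rw [sub_mul, one_mul, map_div₀, Complex.conj_ofReal, div_mul_eq_mul_div, hcq]
    congr 1
    rw [mul_div_assoc, div_self hne, mul_one]
  rw [hωq, Complex.sub_re, Complex.ofReal_re] at h2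
  have hre : ‖q‖ ≤ q.re := by linarith
  have habs : |q.re| ≤ ‖q‖ := by
    exact Complex.abs_re_le_norm q
  have hreabs : q.re = ‖q‖ := le_antisymm (le_trans (le_abs_self _) habs) hre
  have hsq : ‖q‖ ^ 2 = q.re ^ 2 + q.im ^ 2 := by
    rw [Complex.sq_norm, Complex.normSq_apply]; ring
  constructor
  · nlinarith
  · linarith


variable {m n : ℕ}

lemma herm_of_im (P : Matrix (Fin n) (Fin n) ℂ)
    (hP : ∀ x : Fin n → ℂ, (star x ⬝ᵥ (P *ᵥ x)).im = 0) : Pᴴ = P := by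
  classical
  have key : ∀ x y : Fin n → ℂ, (star x ⬝ᵥ (P *ᵥ y) + star y ⬝ᵥ (P *ᵥ x)).im = 0 := by
    intro x y
    have h1 := hP (x + y)
    have h2 := hP x
    have h3 := hP y
    simp only [star_add, Matrix.mulVec_add, add_dotProduct, dotProduct_add,
      Complex.add_im] at h1
    simp only [Complex.add_im]
    linarith
  have e1 : ∀ i : Fin n, star (Pi.single i (1:ℂ) : Fin n → ℂ) = Pi.single i (1:ℂ) := by
    intro i
    funext k
    simp [Pi.single_apply, apply_ite]
  ext i j
  have h0 : ∀ a b : Fin n, (Pi.single a (1:ℂ) : Fin n → ℂ) ⬝ᵥ (P *ᵥ Pi.single b (1:ℂ)) = P a b := by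
    intro a b
    rw [Matrix.mulVec_single, single_dotProduct]
    simp
  have hxy : star (Pi.single i (1:ℂ) : Fin n → ℂ) ⬝ᵥ (P *ᵥ Pi.single j (1:ℂ)) = P i j := by
    rw [e1 i]; exact h0 i j
  have hyx : star (Pi.single j (1:ℂ) : Fin n → ℂ) ⬝ᵥ (P *ᵥ Pi.single i (1:ℂ)) = P j i := by
    rw [e1 j]; exact h0 j i
  have k1 := key (Pi.single i (1:ℂ)) (Pi.single j (1:ℂ))
  rw [hxy, hyx] at k1
  have k2 := key (Pi.single i (1:ℂ)) (Complex.I • (Pi.single j (1:ℂ) : Fin n → ℂ))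
  have hsx : star (Complex.I • (Pi.single j (1:ℂ) : Fin n → ℂ)) = (-Complex.I) • (Pi.single j (1:ℂ) : Fin n → ℂ) := by
    rw [star_smul, e1 j]
    simp [Complex.conj_I]
  rw [Matrix.mulVec_smul, dotProduct_smul, hxy, hsx, smul_dotProduct, h0 j i] at k2
  simp only [smul_eq_mul, Complex.add_im, Complex.mul_im, Complex.I_re, Complex.I_im,
    Complex.neg_re, Complex.neg_im] at k2
  simp only [Complex.add_im] at k1
  apply Complex.ext
  · simp only [Matrix.conjTranspose_apply, RCLike.star_def, Complex.conj_re]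
    nlinarith [k2]
  · simp only [Matrix.conjTranspose_apply, RCLike.star_def, Complex.conj_im]
    linarith [k1]

lemma trace_conj_mul' (A B : Matrix (Fin m) (Fin n) ℂ) :
    Matrix.trace (Aᴴ * B) = ∑ j, ∑ i, (starRingEnd ℂ) (A i j) * B i j := by
  simp [Matrix.trace, Matrix.diag, Matrix.mul_apply, Matrix.conjTranspose_apply]

lemma frob_sq' (A : Matrix (Fin m) (Fin n) ℂ) :
    frobNorm A ^ 2 = (Matrix.trace (Aᴴ * A)).re := by
  rw [frobNorm, Real.sq_sqrt (by positivity), trace_conj_mul', Complex.re_sum]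
  rw [Finset.sum_comm]
  congr 1; ext i
  rw [Complex.re_sum]
  congr 1; ext j
  rw [Complex.conj_mul']
  simp [← Complex.ofReal_pow]

lemma re_trace_comm' (A B : Matrix (Fin m) (Fin n) ℂ) :
    (Matrix.trace (Aᴴ * B)).re = (Matrix.trace (Bᴴ * A)).re := by
  have h : (Bᴴ * A) = (Aᴴ * B)ᴴ := by simp [Matrix.conjTranspose_mul]
  rw [h]
  have : Matrix.trace ((Aᴴ * B)ᴴ) = (starRingEnd ℂ) (Matrix.trace (Aᴴ * B)) := by
    simp [Matrix.trace, Matrix.diag, Matrix.conjTranspose_apply]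
  rw [this]
  simp

lemma frob_expand (U W : Matrix (Fin m) (Fin n) ℂ) :
    frobNorm (U - W) ^ 2 =
      frobNorm U ^ 2 + frobNorm W ^ 2 - 2 * (Matrix.trace (Wᴴ * U)).re := by
  rw [frob_sq', frob_sq', frob_sq']
  have h : (U - W)ᴴ * (U - W) = Uᴴ*U - Uᴴ*W - Wᴴ*U + Wᴴ*W := by
    rw [Matrix.conjTranspose_sub, Matrix.sub_mul, Matrix.mul_sub, Matrix.mul_sub]
    abel
  rw [h, Matrix.trace_add, Matrix.trace_sub, Matrix.trace_sub]
  simp only [Complex.add_re, Complex.sub_re]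
  have := re_trace_comm' U W
  linarith


end Stmt16

theorem stmt_16 {D r : ℕ} (U X : Matrix (Fin D) (Fin r) ℂ) (hXrank : X.rank = r)
    (R : Matrix (Fin r) (Fin r) ℂ)
    (hRunit : Rᴴ * R = 1)
    (hRmin : ∀ R' : Matrix (Fin r) (Fin r) ℂ, R'ᴴ * R' = 1 →
      frobNorm (U - X * R) ≤ frobNorm (U - X * R')) :
    frobNorm (U - X * R) ^ 2 ≤
      1 / (2 * (Real.sqrt 2 - 1) * sigmaMin X ^ 2) * frobNorm (U * Uᴴ - X * Xᴴ) ^ 2 := by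
  classical
  rcases Nat.eq_zero_or_pos r with hr0 | hrpos
  · subst hr0
    have h1 : frobNorm (U - X * R) = 0 := by simp [frobNorm]
    have h2 : U * Uᴴ - X * Xᴴ = 0 := by
      ext i j
      simp [Matrix.mul_apply, Matrix.sub_apply]
    rw [h1, h2]
    have h3 : frobNorm (0 : Matrix (Fin D) (Fin D) ℂ) = 0 := by simp [frobNorm]
    rw [h3]
    norm_num
  haveI : Nonempty (Fin r) := ⟨⟨0, hrpos⟩⟩
  have hRRH : R * Rᴴ = 1 := mul_eq_one_comm.mp hRunit
  set Y : Matrix (Fin D) (Fin r) ℂ := X * R with hY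
  set Δ : Matrix (Fin D) (Fin r) ℂ := U - Y with hΔ
  -- σ² and its positivity
  have hG := Matrix.isHermitian_conjTranspose_mul_self X
  set σ2 : ℝ := ⨅ i : Fin r, hG.eigenvalues i with hσ2
  have hσle : ∀ i, σ2 ≤ hG.eigenvalues i := fun i =>
    ciInf_le (Finite.bddBelow_range _) i
  have hrank : (Xᴴ * X).rank = r := by
    rw [Matrix.rank_conjTranspose_mul_self, hXrank]
  have hall : ∀ i, hG.eigenvalues i ≠ 0 := by
    intro i hi0
    have hlt : Fintype.card {j // hG.eigenvalues j ≠ 0} < Fintype.card (Fin r) :=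
      Fintype.card_subtype_lt (x := i) (by simp [hi0])
    rw [← hG.rank_eq_card_non_zero_eigs, hrank, Fintype.card_fin] at hlt
    exact lt_irrefl _ hlt
  have hpos : ∀ i, 0 < hG.eigenvalues i := fun i =>
    lt_of_le_of_ne (Matrix.eigenvalues_conjTranspose_mul_self_nonneg X i) (Ne.symm (hall i))
  have hσpos : 0 < σ2 := by
    obtain ⟨i0, hi0⟩ := Finite.exists_min hG.eigenvalues
    exact lt_of_lt_of_le (hpos i0) (le_ciInf hi0)
  have hsig : sigmaMin X ^ 2 = σ2 := by
    rw [sigmaMin, Real.sq_sqrt hσpos.le]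
  -- optimality : trace inequality for unitaries
  have hopt : ∀ V : Matrix (Fin r) (Fin r) ℂ, Vᴴ * V = 1 →
      (Matrix.trace (Vᴴ * (Yᴴ * U))).re ≤ (Matrix.trace (Yᴴ * U)).re := by
    intro V hV
    have hRV : (R * V)ᴴ * (R * V) = 1 := by
      rw [Matrix.conjTranspose_mul, Matrix.mul_assoc, ← Matrix.mul_assoc Rᴴ, hRunit,
        Matrix.one_mul, hV]
    have hle := hRmin (R * V) hRV
    have hle2 : frobNorm (U - X * R) ^ 2 ≤ frobNorm (U - X * (R * V)) ^ 2 :=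
      pow_le_pow_left₀ (Stmt16.frob_nonneg _) hle 2
    rw [Stmt16.frob_expand, Stmt16.frob_expand] at hle2
    have hVV : V * Vᴴ = 1 := mul_eq_one_comm.mp hV
    have hnorm : frobNorm (X * (R * V)) ^ 2 = frobNorm (X * R) ^ 2 := by
      rw [Stmt16.frob_sq', Stmt16.frob_sq']
      have e0 : X * (R * V) = (X * R) * V := by rw [Matrix.mul_assoc]
      rw [e0, Matrix.conjTranspose_mul]
      have e1 : Vᴴ * (X * R)ᴴ * ((X * R) * V) = Vᴴ * ((X * R)ᴴ * ((X * R) * V)) := by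
        simp only [Matrix.mul_assoc]
      rw [e1, Matrix.trace_mul_comm]
      have e2 : (X * R)ᴴ * (X * R) * V * Vᴴ = (X * R)ᴴ * (X * R) * (V * Vᴴ) := by
        simp only [Matrix.mul_assoc]
      have e3 : (X * R)ᴴ * ((X * R) * V) * Vᴴ = (X * R)ᴴ * (X * R) * (V * Vᴴ) := by
        simp only [Matrix.mul_assoc]
      rw [e3, hVV, Matrix.mul_one]
    have hdot : Matrix.trace ((X * (R * V))ᴴ * U) = Matrix.trace (Vᴴ * (Yᴴ * U)) := by
      rw [hY]
      congr 1
      simp only [Matrix.conjTranspose_mul, Matrix.mul_assoc]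
    rw [hnorm, hdot] at hle2
    have hdot0 : Matrix.trace ((X * R)ᴴ * U) = Matrix.trace (Yᴴ * U) := by rw [hY]
    rw [hdot0] at hle2
    linarith
  -- PSD facts for P = Yᴴ U
  have hPq := Stmt16.opt_psd (Yᴴ * U) hopt
  have hPH : (Yᴴ * U)ᴴ = Yᴴ * U := Stmt16.herm_of_im (Yᴴ * U) (fun x => (hPq x).1)
  -- Hermitian facts
  have hQH : (Δᴴ * Δ)ᴴ = Δᴴ * Δ := by
    simp [Matrix.conjTranspose_mul]
  have hTsplit : Yᴴ * Δ = Yᴴ * U - Yᴴ * Y := by rw [hΔ, Matrix.mul_sub]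
  have hTH : (Yᴴ * Δ)ᴴ = Yᴴ * Δ := by
    rw [hTsplit, Matrix.conjTranspose_sub, hPH]
    simp [Matrix.conjTranspose_mul]
  have hUconj : Uᴴ = Yᴴ + Δᴴ := by
    rw [hΔ, Matrix.conjTranspose_sub]
    abel
  have hSsum : Uᴴ * Δ = Yᴴ * Δ + Δᴴ * Δ := by rw [hUconj, Matrix.add_mul]
  have hSH : (Uᴴ * Δ)ᴴ = Uᴴ * Δ := by
    rw [hSsum, Matrix.conjTranspose_add, hTH, hQH]
  -- real quantities
  set d : ℝ := frobNorm Δ ^ 2 with hd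
  set a : ℝ := frobNorm (Δᴴ * Δ) with ha
  set t : ℝ := frobNorm (Yᴴ * Δ) with ht
  set w : ℝ := (Matrix.trace ((Δᴴ * Δ) * (Yᴴ * Δ))).re with hw
  set p : ℝ := (Matrix.trace ((Δᴴ * Δ) * (Yᴴ * U))).re with hp
  set s : ℝ := (Matrix.trace ((Δᴴ * Δ) * (Yᴴ * Y))).re with hs
  set E : ℝ := frobNorm (U * Uᴴ - X * Xᴴ) ^ 2 with hE
  -- basic nonneg
  have hd0 : 0 ≤ d := by rw [hd]; positivity
  have ha0 : 0 ≤ a := Stmt16.frob_nonneg _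
  have ht0 : 0 ≤ t := Stmt16.frob_nonneg _
  -- (F6) |w| ≤ a t
  have hF6 : |w| ≤ a * t := by
    have := Stmt16.cauchy (Δᴴ * Δ) (Yᴴ * Δ)
    rw [hQH] at this
    exact this
  -- (F3) frobNorm (Uᴴ Δ)² = a² + t² + 2w
  have hF3 : frobNorm (Uᴴ * Δ) ^ 2 = a ^ 2 + t ^ 2 + 2 * w := by
    rw [Stmt16.frob_sq']
    conv_lhs => rw [hSsum, Matrix.conjTranspose_add, hTH, hQH, Matrix.add_mul,
      Matrix.mul_add, Matrix.mul_add, Matrix.trace_add, Matrix.trace_add, Matrix.trace_add]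
    simp only [Complex.add_re]
    have e1 : (Matrix.trace ((Yᴴ * Δ) * (Yᴴ * Δ))).re = t ^ 2 := by
      conv_lhs => rw [show (Yᴴ * Δ) * (Yᴴ * Δ) = (Yᴴ * Δ)ᴴ * (Yᴴ * Δ) by rw [hTH]]
      rw [ht, Stmt16.frob_sq']
    have e2 : (Matrix.trace ((Δᴴ * Δ) * (Δᴴ * Δ))).re = a ^ 2 := by
      conv_lhs => rw [show (Δᴴ * Δ) * (Δᴴ * Δ) = (Δᴴ * Δ)ᴴ * (Δᴴ * Δ) by rw [hQH]]
      rw [ha, Stmt16.frob_sq']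
    have e3 : (Matrix.trace ((Yᴴ * Δ) * (Δᴴ * Δ))).re = w := by
      have := Stmt16.re_trace_comm' ((Yᴴ * Δ)ᴴ) ((Δᴴ * Δ)ᴴ)
      rw [Matrix.conjTranspose_conjTranspose, Matrix.conjTranspose_conjTranspose, hTH, hQH]
        at this
      rw [this, hw]
    rw [e1, e2, e3, hw]
    ring
  -- (F4) p = w + s
  have hF4 : p = w + s := by
    rw [hp, hw, hs]
    have hU2 : U = Δ + Y := by rw [hΔ]; abel
    conv_lhs => rw [hU2]
    rw [show Yᴴ * (Δ + Y) = Yᴴ * Δ + Yᴴ * Y from Matrix.mul_add _ _ _,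
      Matrix.mul_add, Matrix.trace_add, Complex.add_re]
  -- (F5) 0 ≤ p
  have hF5 : 0 ≤ p := by
    rw [hp]
    have ecyc : Matrix.trace ((Δᴴ * Δ) * (Yᴴ * U)) = Matrix.trace (Δ * (Yᴴ * U) * Δᴴ) := by
      have h1 : (Δᴴ * Δ) * (Yᴴ * U) = Δᴴ * (Δ * (Yᴴ * U)) := by simp only [Matrix.mul_assoc]
      rw [h1, Matrix.trace_mul_comm]
    rw [ecyc, Stmt16.trace_CGC, Complex.re_sum]
    exact Finset.sum_nonneg fun i _ => (hPq (star (Δ i))).2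
  -- (F2) E = ‖UᴴΔ‖² + t² + 2p
  have hF2 : E = frobNorm (Uᴴ * Δ) ^ 2 + t ^ 2 + 2 * p := by
    have hXXYY : Y * Yᴴ = X * Xᴴ := by
      rw [hY, Matrix.conjTranspose_mul, ← Matrix.mul_assoc, Matrix.mul_assoc X R, hRRH,
        Matrix.mul_one]
    have hM : U * Uᴴ - X * Xᴴ = Δ * Uᴴ + Y * Δᴴ := by
      have hΔH : Δᴴ = Uᴴ - Yᴴ := by rw [hΔ, Matrix.conjTranspose_sub]
      rw [hΔ, hΔH, Matrix.sub_mul, Matrix.mul_sub, ← hXXYY]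
      abel
    have hMH : (U * Uᴴ - X * Xᴴ)ᴴ = U * Uᴴ - X * Xᴴ := by
      simp [Matrix.conjTranspose_sub, Matrix.conjTranspose_mul]
    rw [hE, Stmt16.frob_sq', hMH]
    conv_lhs => rw [hM, Matrix.add_mul, Matrix.mul_add, Matrix.mul_add, Matrix.trace_add,
      Matrix.trace_add, Matrix.trace_add]
    simp only [Complex.add_re]
    have e1 : (Matrix.trace ((Δ * Uᴴ) * (Δ * Uᴴ))).re = frobNorm (Uᴴ * Δ) ^ 2 := by
      have h1 : (Δ * Uᴴ) * (Δ * Uᴴ) = Δ * (Uᴴ * Δ * Uᴴ) := by simp only [Matrix.mul_assoc]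
      rw [h1, Matrix.trace_mul_comm]
      have h2 : Uᴴ * Δ * Uᴴ * Δ = (Uᴴ * Δ) * (Uᴴ * Δ) := by simp only [Matrix.mul_assoc]
      rw [h2, show (Uᴴ * Δ) * (Uᴴ * Δ) = (Uᴴ * Δ)ᴴ * (Uᴴ * Δ) by rw [hSH],
        ← Stmt16.frob_sq']
    have e4 : (Matrix.trace ((Y * Δᴴ) * (Y * Δᴴ))).re = t ^ 2 := by
      have h1 : (Y * Δᴴ) * (Y * Δᴴ) = Y * (Δᴴ * Y * Δᴴ) := by simp only [Matrix.mul_assoc]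
      rw [h1, Matrix.trace_mul_comm]
      have h2 : Δᴴ * Y * Δᴴ * Y = (Δᴴ * Y) * (Δᴴ * Y) := by simp only [Matrix.mul_assoc]
      have h3 : Δᴴ * Y = (Yᴴ * Δ)ᴴ := by simp [Matrix.conjTranspose_mul]
      rw [h2, h3, show (Yᴴ * Δ)ᴴ * (Yᴴ * Δ)ᴴ = (Yᴴ * Δ)ᴴ * (Yᴴ * Δ) by rw [hTH]]
      rw [ht, Stmt16.frob_sq']
    have e2 : (Matrix.trace ((Δ * Uᴴ) * (Y * Δᴴ))).re = p := by
      have h1 : (Δ * Uᴴ) * (Y * Δᴴ) = Δ * (Uᴴ * (Y * Δᴴ)) := by simp only [Matrix.mul_assoc]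
      rw [h1, Matrix.trace_mul_comm]
      have h2 : Uᴴ * (Y * Δᴴ) * Δ = (Uᴴ * Y) * (Δᴴ * Δ) := by simp only [Matrix.mul_assoc]
      rw [h2, Matrix.trace_mul_comm]
      have h3 : Uᴴ * Y = Yᴴ * U := by
        conv_rhs => rw [← hPH]
        simp [Matrix.conjTranspose_mul]
      rw [h3, hp]
    have e3 : (Matrix.trace ((Y * Δᴴ) * (Δ * Uᴴ))).re = p := by
      have h1 : (Y * Δᴴ) * (Δ * Uᴴ) = Y * (Δᴴ * (Δ * Uᴴ)) := by simp only [Matrix.mul_assoc]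
      rw [h1, Matrix.trace_mul_comm]
      have h2 : Δᴴ * (Δ * Uᴴ) * Y = (Δᴴ * Δ) * (Uᴴ * Y) := by simp only [Matrix.mul_assoc]
      rw [h2]
      have h3 : Uᴴ * Y = Yᴴ * U := by
        conv_rhs => rw [← hPH]
        simp [Matrix.conjTranspose_mul]
      rw [h3, hp]
    rw [e1, e2, e3, e4]
    ring
  -- (F7) σ2 d ≤ s
  have hF7 : σ2 * d ≤ s := by
    set C : Matrix (Fin D) (Fin r) ℂ := Δ * Rᴴ with hC
    have hs1 : Matrix.trace ((Δᴴ * Δ) * (Yᴴ * Y)) = Matrix.trace (C * (Xᴴ * X) * Cᴴ) := by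
      have h1 : (Δᴴ * Δ) * (Yᴴ * Y) = Δᴴ * (Δ * (Yᴴ * Y)) := by simp only [Matrix.mul_assoc]
      rw [h1, Matrix.trace_mul_comm]
      congr 1
      rw [hY, hC]
      simp only [Matrix.conjTranspose_mul, Matrix.conjTranspose_conjTranspose,
        Matrix.mul_assoc]
    have hd1 : (Matrix.trace (C * (1 : Matrix (Fin r) (Fin r) ℂ) * Cᴴ)).re = d := by
      rw [Matrix.mul_one]
      have h1 : C * Cᴴ = Δ * Δᴴ := by
        rw [hC, Matrix.conjTranspose_mul, Matrix.conjTranspose_conjTranspose]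
        have h2 : Δ * Rᴴ * (R * Δᴴ) = Δ * ((Rᴴ * R) * Δᴴ) := by simp only [Matrix.mul_assoc]
        rw [h2, hRunit, Matrix.one_mul]
      rw [h1, Matrix.trace_mul_comm, hd, Stmt16.frob_sq']
    have hσd : σ2 * d ≤ (Matrix.trace (C * (Xᴴ * X) * Cᴴ)).re := by
      rw [Stmt16.trace_CGC, Complex.re_sum]
      have hd2 : d = ∑ i, (star (star (C i)) ⬝ᵥ
          ((1 : Matrix (Fin r) (Fin r) ℂ) *ᵥ star (C i))).re := by
        rw [← hd1, Stmt16.trace_CGC, Complex.re_sum]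
      rw [hd2, Finset.mul_sum]
      refine Finset.sum_le_sum fun i _ => ?_
      have hqg := Stmt16.quad_ge (Xᴴ * X) hG σ2 hσle (star (C i))
      simpa [Matrix.one_mulVec] using hqg
    rw [hs, hs1]
    exact hσd
  -- final arithmetic
  have hsqrt2 : Real.sqrt 2 ^ 2 = 2 := Real.sq_sqrt (by norm_num)
  have h12 : 1 < Real.sqrt 2 := by nlinarith [Real.sqrt_nonneg 2]
  have hw' : -(a * t) ≤ w := neg_le_of_abs_le hF6
  have hE2 : E = a ^ 2 + 2 * t ^ 2 + 2 * w + 2 * p := by rw [hF2, hF3]; ring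
  have key : (2 * Real.sqrt 2 - 2) * (σ2 * d) ≤ E := by
    have c1 : 0 ≤ (4 - 2 * Real.sqrt 2) * p := mul_nonneg (by nlinarith) hF5
    have c2 : (2 * Real.sqrt 2 - 2) * (σ2 * d) ≤ (2 * Real.sqrt 2 - 2) * s :=
      mul_le_mul_of_nonneg_left hF7 (by nlinarith)
    have c3 : 2 * Real.sqrt 2 * (-(a * t)) ≤ 2 * Real.sqrt 2 * w :=
      mul_le_mul_of_nonneg_left hw' (by positivity)
    have c4' : 0 ≤ a ^ 2 - 2 * Real.sqrt 2 * (a * t) + 2 * t ^ 2 := by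
      nlinarith [sq_nonneg (a - Real.sqrt 2 * t), hsqrt2, sq_nonneg t]
    have hF4u : (2 * Real.sqrt 2 - 2) * s = (2 * Real.sqrt 2 - 2) * (p - w) := by
      rw [hF4]; ring
    nlinarith [hE2, c1, c2, c3, c4', hF4u]
  rw [hsig]
  have hcpos : 0 < 2 * (Real.sqrt 2 - 1) * σ2 := by
    have h1 : 0 < Real.sqrt 2 - 1 := by linarith
    positivity
  rw [one_div, ← div_eq_inv_mul, le_div_iff₀ hcpos]
  have hring : d * (2 * (Real.sqrt 2 - 1) * σ2) = (2 * Real.sqrt 2 - 2) * (σ2 * d) := by ring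
  linarith [key]
end

section
/- The function h : [0, 0.09] → ℝ defined by h(δ) = (√2 + √(82.55 − 762.54·δ − 843.09·δ²)) / (1.5 − 15.7·δ) is well defined (the expression under the square root is nonnegative and the denominator is positive for all δ ∈ [0, 0.09]) and is monotonically increasing on [0, 0.09]. -/
open Matrix
open scoped BigOperators ComplexOrder

/-- `h` is well defined and monotonically increasing on `[0, 0.09]`. -/
theorem stmt_18 :
    (∀ δ ∈ Set.Icc (0 : ℝ) 0.09,
        0 ≤ 82.55 - 762.54 * δ - 843.09 * δ ^ 2 ∧ 0 < 1.5 - 15.7 * δ) ∧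
      MonotoneOn hfun (Set.Icc (0 : ℝ) 0.09) := by
  constructor
  · intro δ hδ
    obtain ⟨h0, h1⟩ := hδ
    exact ⟨by nlinarith, by nlinarith⟩
  · intro a ha b hb hab
    obtain ⟨ha0, ha1⟩ := ha
    obtain ⟨hb0, hb1⟩ := hb
    have da : (0:ℝ) < 1.5 - 15.7 * a := by nlinarith
    have db : (0:ℝ) < 1.5 - 15.7 * b := by nlinarith
    have ga : (0:ℝ) ≤ 82.55 - 762.54 * a - 843.09 * a ^ 2 := by nlinarith
    have gb : (0:ℝ) ≤ 82.55 - 762.54 * b - 843.09 * b ^ 2 := by nlinarith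
    unfold hfun
    rw [div_le_div_iff₀ da db]
    have key : Real.sqrt (82.55 - 762.54 * a - 843.09 * a ^ 2) * (1.5 - 15.7 * b)
        ≤ Real.sqrt (82.55 - 762.54 * b - 843.09 * b ^ 2) * (1.5 - 15.7 * a) := by
      have e1 : Real.sqrt (82.55 - 762.54 * a - 843.09 * a ^ 2) * (1.5 - 15.7 * b)
          = Real.sqrt ((82.55 - 762.54 * a - 843.09 * a ^ 2) * (1.5 - 15.7 * b) ^ 2) := by
        rw [Real.sqrt_mul ga, Real.sqrt_sq db.le]
      have e2 : Real.sqrt (82.55 - 762.54 * b - 843.09 * b ^ 2) * (1.5 - 15.7 * a)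
          = Real.sqrt ((82.55 - 762.54 * b - 843.09 * b ^ 2) * (1.5 - 15.7 * a) ^ 2) := by
        rw [Real.sqrt_mul gb, Real.sqrt_sq da.le]
      rw [e1, e2]
      apply Real.sqrt_le_sqrt
      nlinarith [mul_nonneg (sub_nonneg.2 hab) (mul_nonneg ha0 hb0),
        mul_nonneg (sub_nonneg.2 hab) (mul_nonneg (sub_nonneg.2 ha1) (sub_nonneg.2 hb1)),
        mul_nonneg (sub_nonneg.2 hab) ha0, mul_nonneg (sub_nonneg.2 hab) hb0,
        mul_nonneg (sub_nonneg.2 hab) (sub_nonneg.2 hb1),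
        mul_nonneg (sub_nonneg.2 hab) (sub_nonneg.2 ha1)]
    have s2 : (0:ℝ) ≤ Real.sqrt 2 := Real.sqrt_nonneg 2
    nlinarith [key, s2, Real.sqrt_nonneg (82.55 - 762.54 * a - 843.09 * a ^ 2)]
end
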